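/- arXiv:1208.1783 — 5 statements merged into one kernel-verified Lean document; each statement's English description precedes it below -/
import Mathlib

section
/- Every conservative weakly log-modular weighted constraint language is balanced. That is, if a weighted constraint language F over a finite domain D (with |D| ≥ 2) contains every unary function D → ℚ≥0 and is weakly log-modular, then F is balanced. -/
open scoped NNRat

/-- A weight function of some arity over domain `D`, taking values in `ℚ≥0`. -/
abbrev WFun (D : Type) : Type := Σ k : ℕ, (Fin k → D) → ℚ≥0

/-- The binary equality weight function. -/
def EQw (D : Type) [DecidableEq D] : (Fin 2 → D) → ℚ≥0 :=
  fun x => if x 0 = x 1 then 1 else 0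

/-- `F` is definable by a pps-formula over `𝓕 ∪ {EQ}`: a sum over `k` bound
variables of a product of `m` atomic formulas. -/
def InFClone {D : Type} [Fintype D] [DecidableEq D] (𝓕 : Set (WFun D)) {n : ℕ}
    (F : (Fin n → D) → ℚ≥0) : Prop :=
  ∃ (k m : ℕ) (ar : Fin m → ℕ) (G : ∀ j : Fin m, (Fin (ar j) → D) → ℚ≥0)
    (sc : ∀ j : Fin m, Fin (ar j) → Fin (n + k)),
    (∀ j : Fin m, (⟨ar j, G j⟩ : WFun D) ∈ 𝓕 ∨ (⟨ar j, G j⟩ : WFun D) = ⟨2, EQw D⟩) ∧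
    ∀ x : Fin n → D, F x = ∑ y : Fin k → D, ∏ j : Fin m, G j (fun i => Fin.append x y (sc j i))

/-- Weak log-modularity of a weighted constraint language. -/
def WeaklyLogModular {D : Type} [Fintype D] [DecidableEq D] (𝓕 : Set (WFun D)) : Prop :=
  ∀ F : (Fin 2 → D) → ℚ≥0, InFClone 𝓕 F → ∀ a b : D,
    F ![a, a] * F ![b, b] = F ![a, b] * F ![b, a] ∨
    (F ![a, a] = 0 ∧ F ![b, b] = 0) ∨
    (F ![a, b] = 0 ∧ F ![b, a] = 0)

/-- The bipartite adjacency relation of a matrix: a row and a column are adjacent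
iff the corresponding entry is non-zero. -/
def MatAdj {R C α : Type*} [Zero α] (M : R → C → α) : R ⊕ C → R ⊕ C → Prop
  | Sum.inl r, Sum.inr c => M r c ≠ 0
  | Sum.inr c, Sum.inl r => M r c ≠ 0
  | _, _ => False

/-- `M` has block-rank 1: every block (submatrix induced by a connected component
of the bipartite graph of `M`) has rank at most 1, i.e. there is a factorisation
`M r c = u r * v c` valid on every connected row/column pair. -/
def BlockRank1 {R C α : Type*} [Zero α] [Mul α] (M : R → C → α) : Prop :=
  ∃ (u : R → α) (v : C → α), ∀ r c,
    Relation.ReflTransGen (MatAdj M) (Sum.inl r) (Sum.inr c) → M r c = u r * v c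

/-- A weighted constraint language is balanced if, for every function in its
functional clone of arity `n = k + l ≥ 2` (with `k, l ≥ 1`), the associated
`|D|^k × |D|^l` matrix has block-rank 1. -/
def BalancedLang {D : Type} [Fintype D] [DecidableEq D] (𝓕 : Set (WFun D)) : Prop :=
  ∀ (k l : ℕ), 1 ≤ k → 1 ≤ l → ∀ F : (Fin (k + l) → D) → ℚ≥0, InFClone 𝓕 F →
    BlockRank1 (fun (x : Fin k → D) (y : Fin l → D) => F (Fin.append x y))

section Atoms
variable {D : Type} [Fintype D] [DecidableEq D]

/-- Bundled atom: a weight function together with its scope. -/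
def PAtom (D : Type) (N : ℕ) : Type := Σ w : WFun D, (Fin w.1 → Fin N)

def evalA {N : ℕ} (a : PAtom D N) (v : Fin N → D) : ℚ≥0 := a.1.2 fun i => v (a.2 i)

def AtomOK (𝓕 : Set (WFun D)) {N : ℕ} (a : PAtom D N) : Prop :=
  a.1 ∈ 𝓕 ∨ a.1 = ⟨2, EQw D⟩

def remapA {N N' : ℕ} (e : Fin N → Fin N') (a : PAtom D N) : PAtom D N' := ⟨a.1, e ∘ a.2⟩

@[simp] lemma evalA_remapA {N N' : ℕ} (e : Fin N → Fin N') (a : PAtom D N) (v : Fin N' → D) :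
    evalA (remapA e a) v = evalA a (v ∘ e) := rfl

@[simp] lemma atomOK_remapA {𝓕 : Set (WFun D)} {N N' : ℕ} (e : Fin N → Fin N') (a : PAtom D N) :
    AtomOK 𝓕 (remapA e a) ↔ AtomOK 𝓕 a := Iff.rfl

lemma inFClone_iff {𝓕 : Set (WFun D)} {n : ℕ} (F : (Fin n → D) → ℚ≥0) :
    InFClone 𝓕 F ↔ ∃ (K m : ℕ) (at_ : Fin m → PAtom D (n + K)),
      (∀ j, AtomOK 𝓕 (at_ j)) ∧
      ∀ x : Fin n → D, F x = ∑ y : Fin K → D, ∏ j : Fin m, evalA (at_ j) (Fin.append x y) := by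
  constructor
  · rintro ⟨K, m, ar, G, sc, h1, h2⟩
    exact ⟨K, m, fun j => ⟨⟨ar j, G j⟩, sc j⟩, h1, h2⟩
  · rintro ⟨K, m, at_, h1, h2⟩
    exact ⟨K, m, fun j => (at_ j).1.1, fun j => (at_ j).1.2, fun j => (at_ j).2, h1, h2⟩

end Atoms
section FinHelpers
variable {α : Type*}

lemma append_lt {n m : ℕ} (a : Fin n → α) (b : Fin m → α) (j : Fin (n+m)) (h : (j:ℕ) < n) :
    Fin.append a b j = a ⟨j, h⟩ := by
  rcases j with ⟨jv, hlt⟩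
  have h' : jv < n := h
  show Fin.append a b ⟨jv, hlt⟩ = a ⟨jv, h'⟩
  have e : Fin.castAdd m ⟨jv, h'⟩ = (⟨jv, hlt⟩ : Fin (n+m)) := by ext; rfl
  rw [← e, Fin.append_left]

lemma append_ge {n m : ℕ} (a : Fin n → α) (b : Fin m → α) (j : Fin (n+m)) (h : n ≤ (j:ℕ)) :
    Fin.append a b j = b ⟨(j:ℕ) - n, by omega⟩ := by
  rcases j with ⟨jv, hlt⟩
  have h' : n ≤ jv := h
  have h2 : jv - n < m := by omega
  show Fin.append a b ⟨jv, hlt⟩ = b ⟨jv - n, h2⟩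
  have e : Fin.natAdd n ⟨jv - n, h2⟩ = (⟨jv, hlt⟩ : Fin (n+m)) := by
    ext; simp; omega
  rw [← e, Fin.append_right]

lemma snoc_lt {n : ℕ} (a : Fin n → α) (c : α) (j : Fin (n+1)) (h : (j:ℕ) < n) :
    Fin.snoc (α := fun _ => α) a c j = a ⟨j, h⟩ := by
  rcases j with ⟨jv, hlt⟩
  have h' : jv < n := h
  show Fin.snoc (α := fun _ => α) a c ⟨jv, hlt⟩ = a ⟨jv, h'⟩
  have e : Fin.castSucc ⟨jv, h'⟩ = (⟨jv, hlt⟩ : Fin (n+1)) := by ext; rfl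
  rw [← e, Fin.snoc_castSucc]

lemma snoc_eq {n : ℕ} (a : Fin n → α) (c : α) (j : Fin (n+1)) (h : (j:ℕ) = n) :
    Fin.snoc (α := fun _ => α) a c j = c := by
  have e : j = Fin.last n := by ext; exact h
  rw [e, Fin.snoc_last]

lemma cons_pos {n : ℕ} (c : α) (a : Fin n → α) (j : Fin (n+1)) (h : 0 < (j:ℕ)) :
    Fin.cons (α := fun _ => α) c a j = a ⟨(j:ℕ) - 1, by omega⟩ := by
  rcases j with ⟨jv, hlt⟩
  have h' : 0 < jv := h
  have h2 : jv - 1 < n := by omega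
  show Fin.cons (α := fun _ => α) c a ⟨jv, hlt⟩ = a ⟨jv - 1, h2⟩
  have e : Fin.succ ⟨jv - 1, h2⟩ = (⟨jv, hlt⟩ : Fin (n+1)) := by ext; simp; omega
  rw [← e, Fin.cons_succ]

lemma cons_zero' {n : ℕ} (c : α) (a : Fin n → α) (j : Fin (n+1)) (h : (j:ℕ) = 0) :
    Fin.cons (α := fun _ => α) c a j = c := by
  have e : j = 0 := by ext; exact h
  rw [e, Fin.cons_zero]

end FinHelpers

section SumHelpers
variable {D : Type} [Fintype D] [DecidableEq D]

def snocEquiv (p : ℕ) (D : Type) : ((Fin p → D) × D) ≃ (Fin (p+1) → D) where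
  toFun q := Fin.snoc q.1 q.2
  invFun y := (Fin.init y, y (Fin.last p))
  left_inv q := by simp [Fin.init_snoc]
  right_inv y := by simp [Fin.snoc_init_self]

omit [DecidableEq D] in
lemma sum_pi_succ (p : ℕ) (g : (Fin (p+1) → D) → ℚ≥0) :
    ∑ y : Fin (p+1) → D, g y = ∑ y : Fin p → D, ∑ c : D, g (Fin.snoc y c) := by
  rw [← Equiv.sum_comp (snocEquiv p D) g, Fintype.sum_prod_type]
  rfl

def splitEquiv (K1 K2 : ℕ) (D : Type) : ((Fin K1 → D) × (Fin K2 → D)) ≃ (Fin (K1+K2) → D) where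
  toFun q := Fin.append q.1 q.2
  invFun y := (fun i => y (Fin.castAdd K2 i), fun i => y (Fin.natAdd K1 i))
  left_inv q :=
    congrArg₂ Prod.mk (funext fun i => Fin.append_left _ _ _)
      (funext fun i => Fin.append_right _ _ _)
  right_inv y := by
    funext j
    show Fin.append _ _ j = y j
    rcases lt_or_ge (j:ℕ) K1 with h | h
    · rw [append_lt _ _ _ h]
      exact congrArg y (by ext; rfl : Fin.castAdd K2 ⟨(j:ℕ), h⟩ = j)
    · rw [append_ge _ _ _ h]
      exact congrArg y (by ext; simp; omega : Fin.natAdd K1 ⟨(j:ℕ) - K1, by omega⟩ = j)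

omit [DecidableEq D] in
lemma sum_pi_split (K1 K2 : ℕ) (g : (Fin (K1+K2) → D) → ℚ≥0) :
    ∑ y : Fin (K1+K2) → D, g y = ∑ y1 : Fin K1 → D, ∑ y2 : Fin K2 → D, g (Fin.append y1 y2) := by
  rw [← Equiv.sum_comp (splitEquiv K1 K2 D) g, Fintype.sum_prod_type]
  rfl

lemma sum_delta_pair {a b : D} (hab : a ≠ b) (lam : ℚ≥0) (X : D → ℚ≥0) :
    ∑ c : D, ((if c = a then 1 else 0) + lam * (if c = b then 1 else 0)) * X c
      = X a + lam * X b := by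
  rw [Finset.sum_congr rfl (g := fun c => (if c = a then X c else 0) + lam * (if c = b then X c else 0))
    (fun c _ => by split_ifs <;> simp_all)]
  rw [Finset.sum_add_distrib, ← Finset.mul_sum]
  simp

lemma sum_delta_one (a : D) (X : D → ℚ≥0) :
    ∑ c : D, (if c = a then 1 else 0) * X c = X a := by
  rw [Finset.sum_congr rfl (g := fun c => if c = a then X c else 0)
    (fun c _ => by split_ifs <;> simp_all)]
  simp
end SumHelpers

section CloneOps
variable {D : Type} [Fintype D] [DecidableEq D] {𝓕 : Set (WFun D)}

lemma InFClone.congr {n : ℕ} {F F' : (Fin n → D) → ℚ≥0} (h : InFClone 𝓕 F)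
    (e : ∀ x, F x = F' x) : InFClone 𝓕 F' := (funext e : F = F') ▸ h

def embR {n n' : ℕ} (σ : Fin n → Fin n') (K : ℕ) : Fin (n+K) → Fin (n'+K) := fun v =>
  if h : (v:ℕ) < n then ⟨(σ ⟨v, h⟩ : ℕ), by have := (σ ⟨v,h⟩).isLt; omega⟩
  else ⟨n' + ((v:ℕ) - n), by have := v.isLt; omega⟩

lemma append_embR {n n' K : ℕ} (σ : Fin n → Fin n') (x : Fin n' → D) (y : Fin K → D)
    (v : Fin (n+K)) : Fin.append x y (embR σ K v) = Fin.append (x ∘ σ) y v := by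
  unfold embR
  split_ifs with h
  · rw [append_lt x y _ (by simpa using (σ ⟨v,h⟩).isLt), append_lt _ _ _ h]
    exact congrArg x (Fin.ext (by simp))
  · have h' : n ≤ (v:ℕ) := by omega
    rw [append_ge x y _ (by simp), append_ge _ _ _ h']
    congr 1
    ext; simp

lemma clone_rename {n n' : ℕ} {F : (Fin n → D) → ℚ≥0} (h : InFClone 𝓕 F) (σ : Fin n → Fin n') :
    InFClone 𝓕 (fun x : Fin n' → D => F (x ∘ σ)) := by
  rw [inFClone_iff] at h ⊢
  obtain ⟨K, m, at_, h1, h2⟩ := h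
  refine ⟨K, m, fun j => remapA (embR σ K) (at_ j), fun j => h1 j, ?_⟩
  intro x
  rw [h2]
  refine Finset.sum_congr rfl fun y _ => Finset.prod_congr rfl fun j _ => ?_
  simp only [evalA_remapA]
  exact congrArg (at_ j).1.2 (funext fun i => (append_embR σ x y ((at_ j).2 i)).symm)

lemma clone_mulUnary (hcons : ∀ u : D → ℚ≥0, (⟨1, fun x => u (x 0)⟩ : WFun D) ∈ 𝓕)
    {n : ℕ} {F : (Fin n → D) → ℚ≥0} (h : InFClone 𝓕 F) (u : D → ℚ≥0) (v0 : Fin n) :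
    InFClone 𝓕 (fun x => F x * u (x v0)) := by
  rw [inFClone_iff] at h ⊢
  obtain ⟨K, m, at_, h1, h2⟩ := h
  refine ⟨K, m+1, Fin.snoc at_ (id (α := PAtom D (n+K)) ⟨⟨1, fun t => u (t 0)⟩, fun _ => Fin.castAdd K v0⟩), ?_, ?_⟩
  · intro j
    rcases lt_or_ge (j:ℕ) m with hj | hj
    · rw [snoc_lt _ _ _ hj]; exact h1 _
    · rw [snoc_eq _ _ _ (by omega)]; exact Or.inl (hcons u)
  · intro x
    rw [h2, Finset.sum_mul]
    refine Finset.sum_congr rfl fun y _ => ?_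
    rw [Fin.prod_univ_castSucc]
    congr 1
    · refine Finset.prod_congr rfl fun j _ => ?_
      rw [snoc_lt _ _ _ (by simp : ((j.castSucc : Fin (m+1)):ℕ) < m)]
      exact congrArg (fun t => evalA (at_ t) (Fin.append x y)) (Fin.ext (by simp)).symm
    · rw [snoc_eq _ _ _ (by simp : ((Fin.last m : Fin (m+1)):ℕ) = m)]
      exact (congrArg u (Fin.append_left x y v0)).symm

def embS (n K : ℕ) : Fin ((n+1)+K) → Fin (n+(K+1)) := fun v =>
  if (v:ℕ) < n then ⟨v, by have := v.isLt; omega⟩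
  else if (v:ℕ) = n then ⟨n+K, by omega⟩
  else ⟨(v:ℕ) - 1, by have := v.isLt; omega⟩

lemma append_embS {n K : ℕ} (x : Fin n → D) (y : Fin K → D) (c : D) (v : Fin ((n+1)+K)) :
    Fin.append x (Fin.snoc y c) (embS n K v) = Fin.append (Fin.snoc x c) y v := by
  unfold embS
  have hv := v.isLt
  split_ifs with h1 h2
  · rw [append_lt _ _ _ (by simpa using by omega : ((⟨(v:ℕ), by omega⟩ : Fin (n+(K+1))):ℕ) < n)]
    rw [append_lt _ _ _ (by omega : (v:ℕ) < n+1), snoc_lt _ _ _ (by simpa using h1)]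
  · rw [append_ge _ _ _ (by simp : n ≤ ((⟨n+K, by omega⟩ : Fin (n+(K+1))):ℕ))]
    rw [append_lt _ _ _ (by omega : (v:ℕ) < n+1)]
    rw [snoc_eq y c _ (by simp : ((⟨n+K-n, by omega⟩ : Fin (K+1)):ℕ) = K)]
    rw [snoc_eq x c _ (by simpa using h2 : ((⟨(v:ℕ), by omega⟩ : Fin (n+1)):ℕ) = n)]
  · have h3 : n + 1 ≤ (v:ℕ) := by omega
    rw [append_ge _ _ _ (by simp; omega : n ≤ (((⟨(v:ℕ)-1, by omega⟩ : Fin (n+(K+1)))):ℕ))]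
    rw [append_ge _ _ _ h3, snoc_lt _ _ _ (by simp; omega)]
    congr 1
    ext; simp; omega

lemma clone_sumSnoc {n : ℕ} {F : (Fin (n+1) → D) → ℚ≥0} (h : InFClone 𝓕 F) :
    InFClone 𝓕 (fun x : Fin n → D => ∑ c : D, F (Fin.snoc x c)) := by
  rw [inFClone_iff] at h ⊢
  obtain ⟨K, m, at_, h1, h2⟩ := h
  refine ⟨K+1, m, fun j => remapA (embS n K) (at_ j), fun j => h1 j, ?_⟩
  intro x
  rw [sum_pi_succ K (fun Y => ∏ j, evalA (remapA (embS n K) (at_ j)) (Fin.append x Y))]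
  rw [Finset.sum_comm]
  refine Finset.sum_congr rfl fun c _ => ?_
  rw [h2]
  refine Finset.sum_congr rfl fun y _ => Finset.prod_congr rfl fun j _ => ?_
  simp only [evalA_remapA]
  exact congrArg (at_ j).1.2 (funext fun i => (append_embS x y c ((at_ j).2 i)).symm)

end CloneOps

section CloneOps2
variable {D : Type} [Fintype D] [DecidableEq D] {𝓕 : Set (WFun D)}

def embP1 (n1 n2 K1 K2 : ℕ) : Fin (n1+K1) → Fin ((n1+n2)+(K1+K2)) := fun v =>
  if h : (v:ℕ) < n1 then ⟨v, by omega⟩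
  else ⟨n1+n2 + ((v:ℕ) - n1), by have := v.isLt; omega⟩

def embP2 (n1 n2 K1 K2 : ℕ) : Fin (n2+K2) → Fin ((n1+n2)+(K1+K2)) := fun v =>
  if h : (v:ℕ) < n2 then ⟨n1 + (v:ℕ), by omega⟩
  else ⟨n1+n2+K1 + ((v:ℕ) - n2), by have := v.isLt; omega⟩

omit [Fintype D] [DecidableEq D] in
lemma append_embP1 {n1 n2 K1 K2 : ℕ} (x : Fin (n1+n2) → D) (y1 : Fin K1 → D) (y2 : Fin K2 → D)
    (v : Fin (n1+K1)) :
    Fin.append x (Fin.append y1 y2) (embP1 n1 n2 K1 K2 v)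
      = Fin.append (fun i => x (Fin.castAdd n2 i)) y1 v := by
  unfold embP1
  have hv := v.isLt
  split_ifs with h
  · rw [append_lt _ _ _ (by simp; omega : ((⟨(v:ℕ), by omega⟩ : Fin ((n1+n2)+(K1+K2))):ℕ) < n1+n2)]
    rw [append_lt _ _ _ h]
    exact congrArg x (Fin.ext (by simp))
  · rw [append_ge _ _ _ (by simp : n1+n2 ≤ ((⟨n1+n2+((v:ℕ)-n1), by omega⟩ : Fin ((n1+n2)+(K1+K2))):ℕ))]
    rw [append_ge _ _ _ (by omega : n1 ≤ (v:ℕ))]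
    rw [append_lt _ _ _ (by simp; omega : ((⟨n1+n2+((v:ℕ)-n1)-(n1+n2), by omega⟩ : Fin (K1+K2)):ℕ) < K1)]
    exact congrArg y1 (Fin.ext (by simp))

omit [Fintype D] [DecidableEq D] in
lemma append_embP2 {n1 n2 K1 K2 : ℕ} (x : Fin (n1+n2) → D) (y1 : Fin K1 → D) (y2 : Fin K2 → D)
    (v : Fin (n2+K2)) :
    Fin.append x (Fin.append y1 y2) (embP2 n1 n2 K1 K2 v)
      = Fin.append (fun i => x (Fin.natAdd n1 i)) y2 v := by
  unfold embP2
  have hv := v.isLt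
  split_ifs with h
  · rw [append_lt _ _ _ (by simp; omega : ((⟨n1+(v:ℕ), by omega⟩ : Fin ((n1+n2)+(K1+K2))):ℕ) < n1+n2)]
    rw [append_lt _ _ _ h]
    exact congrArg x (Fin.ext (by simp))
  · rw [append_ge _ _ _ (by simp; omega : n1+n2 ≤ ((⟨n1+n2+K1+((v:ℕ)-n2), by omega⟩ : Fin ((n1+n2)+(K1+K2))):ℕ))]
    rw [append_ge _ _ _ (by omega : n2 ≤ (v:ℕ))]
    rw [append_ge _ _ _ (by simp; omega : K1 ≤ ((⟨n1+n2+K1+((v:ℕ)-n2)-(n1+n2), by omega⟩ : Fin (K1+K2)):ℕ))]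
    exact congrArg y2 (Fin.ext (by simp; omega))

lemma clone_mul {n1 n2 : ℕ} {F1 : (Fin n1 → D) → ℚ≥0} {F2 : (Fin n2 → D) → ℚ≥0}
    (hF1 : InFClone 𝓕 F1) (hF2 : InFClone 𝓕 F2) :
    InFClone 𝓕 (fun x : Fin (n1+n2) → D =>
      F1 (fun i => x (Fin.castAdd n2 i)) * F2 (fun i => x (Fin.natAdd n1 i))) := by
  rw [inFClone_iff] at hF1 hF2 ⊢
  obtain ⟨K1, m1, A1, hA1, e1⟩ := hF1
  obtain ⟨K2, m2, A2, hA2, e2⟩ := hF2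
  refine ⟨K1+K2, m1+m2,
    fun j => Fin.addCases (motive := fun _ => PAtom D ((n1+n2)+(K1+K2)))
      (fun j1 => remapA (embP1 n1 n2 K1 K2) (A1 j1))
      (fun j2 => remapA (embP2 n1 n2 K1 K2) (A2 j2)) j, ?_, ?_⟩
  · intro j
    induction j using Fin.addCases with
    | left j1 => simpa only [Fin.addCases_left, atomOK_remapA] using hA1 j1
    | right j2 => simpa only [Fin.addCases_right, atomOK_remapA] using hA2 j2
  · intro x
    simp only [e1, e2]
    rw [Finset.sum_mul_sum, sum_pi_split K1 K2]
    refine Finset.sum_congr rfl fun y1 _ => Finset.sum_congr rfl fun y2 _ => ?_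
    rw [Fin.prod_univ_add]
    congr 1
    · refine Finset.prod_congr rfl fun j1 _ => ?_
      simp only [Fin.addCases_left, evalA_remapA]
      exact (congrArg (A1 j1).1.2 (funext fun i => (append_embP1 x y1 y2 ((A1 j1).2 i)))).symm
    · refine Finset.prod_congr rfl fun j2 _ => ?_
      simp only [Fin.addCases_right, evalA_remapA]
      exact (congrArg (A2 j2).1.2 (funext fun i => (append_embP2 x y1 y2 ((A2 j2).2 i)))).symm

end CloneOps2

section EvalLemmas
variable {α : Type*}

lemma append_eval {n m : ℕ} (a : Fin n → α) (b : Fin m → α) (j : Fin (n+m)) :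
    Fin.append a b j = if h : (j:ℕ) < n then a ⟨j, h⟩ else b ⟨(j:ℕ)-n, by have := j.isLt; omega⟩ := by
  split_ifs with h
  · exact append_lt a b j h
  · exact append_ge a b j (by omega)

lemma snoc_eval {n : ℕ} (a : Fin n → α) (c : α) (j : Fin (n+1)) :
    Fin.snoc (α := fun _ => α) a c j = if h : (j:ℕ) < n then a ⟨j, h⟩ else c := by
  split_ifs with h
  · exact snoc_lt a c j h
  · exact snoc_eq a c j (by have := j.isLt; omega)

lemma cons_eval {n : ℕ} (c : α) (a : Fin n → α) (j : Fin (n+1)) :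
    Fin.cons (α := fun _ => α) c a j = if h : (j:ℕ) = 0 then c else a ⟨(j:ℕ)-1, by have := j.isLt; omega⟩ := by
  split_ifs with h
  · exact cons_zero' c a j h
  · exact cons_pos c a j (by omega)

end EvalLemmas

section Derived
variable {D : Type} [Fintype D] [DecidableEq D] {𝓕 : Set (WFun D)}

omit [Fintype D] [DecidableEq D] in
lemma append_snoc' {n p : ℕ} (v : Fin n → D) (y : Fin p → D) (c : D) :
    Fin.append v (Fin.snoc y c) = Fin.snoc (Fin.append v y) c := by
  funext j
  have hj := j.isLt
  simp only [append_eval, snoc_eval, Fin.val_mk, Nat.add_eq]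
  split_ifs <;> first
    | rfl
    | omega
    | (exact congrArg _ (Fin.ext (by omega)))
    | (exact congrArg _ (Fin.ext (by simp only [Fin.val_mk]; omega)))
    | (exact congrArg _ (Fin.ext (by simp)))
    | (exact congrArg _ (Fin.ext (by simp; omega)))

/-- Sum over the first variable with a unary weight. -/
lemma clone_sumCons (hcons : ∀ u : D → ℚ≥0, (⟨1, fun x => u (x 0)⟩ : WFun D) ∈ 𝓕)
    {n : ℕ} {F : (Fin (n+1) → D) → ℚ≥0} (h : InFClone 𝓕 F) (u : D → ℚ≥0) :
    InFClone 𝓕 (fun v : Fin n → D => ∑ c : D, u c * F (Fin.cons c v)) := by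
  have h1 := clone_rename h (fun j : Fin (n+1) =>
    if (j:ℕ) = 0 then (⟨n, by omega⟩ : Fin (n+1)) else ⟨(j:ℕ) - 1, by have := j.isLt; omega⟩)
  have h2 := clone_mulUnary hcons h1 u (⟨n, by omega⟩ : Fin (n+1))
  have h3 := clone_sumSnoc h2
  refine h3.congr fun v => Finset.sum_congr rfl fun c _ => ?_
  rw [snoc_eq v c ⟨n, by omega⟩ (by simp), mul_comm]
  congr 2
  funext j
  have hj := j.isLt
  simp only [snoc_eval, cons_eval, Function.comp]
  by_cases e : (j:ℕ) = 0
  · rw [if_pos e]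
    simp only [Fin.val_mk]
    rw [dif_pos e, dif_neg (by omega)]
  · rw [if_neg e]
    simp only [Fin.val_mk]
    rw [dif_neg e, dif_pos (by omega : (j:ℕ)-1 < n)]

/-- Sum away a trailing block of bound variables. -/
lemma clone_blockSum {n : ℕ} : ∀ (p : ℕ) (F : (Fin (n+p) → D) → ℚ≥0), InFClone 𝓕 F →
    InFClone 𝓕 (fun v : Fin n → D => ∑ y : Fin p → D, F (Fin.append v y)) := by
  intro p
  induction p with
  | zero =>
    intro F hF
    haveI : Unique (Fin 0 → D) := ⟨⟨Fin.elim0⟩, fun y => funext fun i => i.elim0⟩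
    refine hF.congr fun v => ?_
    rw [Fintype.sum_unique]
    congr 1
    funext j
    rw [append_lt _ _ _ (by have := j.isLt; omega : (j:ℕ) < n)]
    exact congrArg v (Fin.ext rfl)
  | succ p ih =>
    intro F hF
    have h1 := clone_sumSnoc hF
    have h2 := ih _ h1
    refine h2.congr fun v => ?_
    rw [sum_pi_succ p (fun y => F (Fin.append v y))]
    refine Finset.sum_congr rfl fun y _ => Finset.sum_congr rfl fun c _ => ?_
    rw [append_snoc']

/-- Insert a value into a row tuple at position `i`. -/
def rowIns {k : ℕ} (i : Fin (k+1)) (c : D) (z : Fin k → D) : Fin (k+1) → D := fun t =>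
  if h0 : (t:ℕ) = (i:ℕ) then c
  else if h : (t:ℕ) < (i:ℕ) then z ⟨(t:ℕ), by have := i.isLt; omega⟩
  else z ⟨(t:ℕ) - 1, by have := t.isLt; omega⟩

/-- Delete position `i` from a row tuple. -/
def rowDel {k : ℕ} (i : Fin (k+1)) (x : Fin (k+1) → D) : Fin k → D := fun t =>
  if h : (t:ℕ) < (i:ℕ) then x ⟨(t:ℕ), by omega⟩ else x ⟨(t:ℕ) + 1, by have := t.isLt; omega⟩

omit [Fintype D] [DecidableEq D] in
lemma rowIns_rowDel {k : ℕ} (i : Fin (k+1)) (x : Fin (k+1) → D) :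
    rowIns i (x i) (rowDel i x) = x := by
  funext t
  have ht := t.isLt
  have hi := i.isLt
  unfold rowIns rowDel
  simp only [Fin.val_mk]
  split_ifs <;> first
    | rfl
    | omega
    | (exact congrArg _ (Fin.ext (by omega)))
    | (exact congrArg _ (Fin.ext (by simp only [Fin.val_mk]; omega)))
    | (exact congrArg _ (Fin.ext (by simp)))
    | (exact congrArg _ (Fin.ext (by simp; omega)))

omit [Fintype D] [DecidableEq D] in
lemma rowDel_rowIns {k : ℕ} (i : Fin (k+1)) (c : D) (z : Fin k → D) :
    rowDel i (rowIns i c z) = z := by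
  funext t
  have ht := t.isLt
  have hi := i.isLt
  unfold rowIns rowDel
  simp only [Fin.val_mk]
  split_ifs <;> first
    | rfl
    | omega
    | (exact congrArg _ (Fin.ext (by omega)))
    | (exact congrArg _ (Fin.ext (by simp only [Fin.val_mk]; omega)))
    | (exact congrArg _ (Fin.ext (by simp)))
    | (exact congrArg _ (Fin.ext (by simp; omega)))

omit [Fintype D] [DecidableEq D] in
lemma rowIns_apply_self {k : ℕ} (i : Fin (k+1)) (c : D) (z : Fin k → D) :
    rowIns i c z i = c := by
  unfold rowIns; simp

/-- The expanded input for summing out row coordinate `i`. -/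
def expandI {k l : ℕ} (i : Fin (k+1)) (c : D) (v : Fin (k+l) → D) : Fin ((k+1)+l) → D := fun j =>
  if h0 : (j:ℕ) = (i:ℕ) then c
  else if h : (j:ℕ) < (i:ℕ) then v ⟨(j:ℕ), by have := i.isLt; omega⟩
  else v ⟨(j:ℕ) - 1, by have := j.isLt; omega⟩

def aggMap {k l : ℕ} (i : Fin (k+1)) : Fin ((k+1)+l) → Fin ((k+l)+1) := fun j =>
  if h0 : (j:ℕ) = (i:ℕ) then ⟨0, by omega⟩
  else if h : (j:ℕ) < (i:ℕ) then ⟨(j:ℕ)+1, by have := i.isLt; have := j.isLt; omega⟩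
  else ⟨(j:ℕ), by have := j.isLt; omega⟩

omit [Fintype D] [DecidableEq D] in
lemma cons_comp_aggMap {k l : ℕ} (i : Fin (k+1)) (c : D) (v : Fin (k+l) → D) :
    (Fin.cons c v) ∘ (aggMap (l := l) i) = expandI i c v := by
  funext j
  have hj := j.isLt
  have hi := i.isLt
  simp only [Function.comp_apply]
  unfold aggMap expandI
  by_cases e1 : (j:ℕ) = (i:ℕ)
  · rw [dif_pos e1, dif_pos e1, cons_zero' _ _ _ rfl]
  · rw [dif_neg e1, dif_neg e1]
    by_cases e2 : (j:ℕ) < (i:ℕ)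
    · rw [dif_pos e2, dif_pos e2, cons_pos _ _ _ (by simp)]
      try exact congrArg v (Fin.ext (by simp))
    · rw [dif_neg e2, dif_neg e2, cons_pos _ _ _ (by show 0 < (j:ℕ); omega)]
      try exact congrArg v (Fin.ext (by simp))

omit [Fintype D] [DecidableEq D] in
lemma expandI_append {k l : ℕ} (i : Fin (k+1)) (c : D) (z : Fin k → D) (y : Fin l → D) :
    expandI i c (Fin.append z y) = Fin.append (rowIns i c z) y := by
  funext j
  have hj := j.isLt
  have hi := i.isLt
  unfold expandI rowIns
  simp only [append_eval, Fin.val_mk, Nat.add_eq]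
  split_ifs <;> first
    | rfl
    | omega
    | (exact congrArg _ (Fin.ext (by omega)))
    | (exact congrArg _ (Fin.ext (by simp only [Fin.val_mk]; omega)))
    | (exact congrArg _ (Fin.ext (by simp)))
    | (exact congrArg _ (Fin.ext (by simp; omega)))

/-- Sum out row coordinate `i` with unary weight `u`. -/
lemma clone_rowAgg (hcons : ∀ u : D → ℚ≥0, (⟨1, fun x => u (x 0)⟩ : WFun D) ∈ 𝓕)
    {k l : ℕ} {F : (Fin ((k+1)+l) → D) → ℚ≥0} (h : InFClone 𝓕 F) (i : Fin (k+1)) (u : D → ℚ≥0) :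
    InFClone 𝓕 (fun v : Fin (k+l) → D => ∑ c : D, u c * F (expandI i c v)) := by
  have h1 := clone_rename h (aggMap (l := l) i)
  have h2 := clone_sumCons hcons h1 u
  refine h2.congr fun v => Finset.sum_congr rfl fun c _ => ?_
  rw [cons_comp_aggMap]

end Derived

section Algebra

lemma lagrange_aux {ι : Type*} [Fintype ι] (a b : ι → ℚ)
    (h : (∑ w, a w * a w) * (∑ w, b w * b w) = (∑ w, a w * b w) * (∑ w, a w * b w)) :
    ∀ w1 w2, a w1 * b w2 = a w2 * b w1 := by
  have key : ∑ w1 : ι, ∑ w2 : ι, (a w1 * b w2 - a w2 * b w1)^2 = 0 := by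
    have e1 : ∑ w1 : ι, ∑ w2 : ι, (a w1 * b w2 - a w2 * b w1)^2
        = ∑ w1 : ι, ∑ w2 : ι, ((a w1*a w1)*(b w2*b w2) + (a w2*a w2)*(b w1*b w1)
            - 2*((a w1*b w1)*(a w2*b w2))) :=
      Finset.sum_congr rfl fun w1 _ => Finset.sum_congr rfl fun w2 _ => by ring
    have p1 : ∑ w1 : ι, ∑ w2 : ι, (a w1*a w1)*(b w2*b w2)
        = (∑ w, a w * a w) * (∑ w, b w * b w) := (Finset.sum_mul_sum _ _ _ _).symm
    have p2 : ∑ w1 : ι, ∑ w2 : ι, (a w2*a w2)*(b w1*b w1)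
        = (∑ w, b w * b w) * (∑ w, a w * a w) := by
      rw [Finset.sum_mul_sum]
      exact Finset.sum_congr rfl fun w1 _ => Finset.sum_congr rfl fun w2 _ => by ring
    have p3 : ∑ w1 : ι, ∑ w2 : ι, (a w1*b w1)*(a w2*b w2)
        = (∑ w, a w * b w) * (∑ w, a w * b w) := (Finset.sum_mul_sum _ _ _ _).symm
    rw [e1]
    have split : ∀ w1 : ι, ∑ w2 : ι, ((a w1*a w1)*(b w2*b w2) + (a w2*a w2)*(b w1*b w1)
            - 2*((a w1*b w1)*(a w2*b w2)))
        = (∑ w2 : ι, (a w1*a w1)*(b w2*b w2)) + (∑ w2 : ι, (a w2*a w2)*(b w1*b w1))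
            - 2*(∑ w2 : ι, (a w1*b w1)*(a w2*b w2)) := by
      intro w1
      rw [Finset.sum_sub_distrib, Finset.sum_add_distrib, Finset.mul_sum]
    rw [Finset.sum_congr rfl fun w1 _ => split w1]
    rw [Finset.sum_sub_distrib, Finset.sum_add_distrib, ← Finset.mul_sum]
    rw [p1, p2, p3]
    linarith [h]
  intro w1 w2
  have h1 := (Finset.sum_eq_zero_iff_of_nonneg
    (fun w _ => Finset.sum_nonneg fun w' _ => sq_nonneg _)).mp key w1 (Finset.mem_univ _)
  have h2 := (Finset.sum_eq_zero_iff_of_nonneg (fun w' _ => sq_nonneg _)).mp h1 w2 (Finset.mem_univ _)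
  have h3 := sq_eq_zero_iff.mp h2
  linarith [h3]

lemma cs_minors {ι : Type*} [Fintype ι] (r m : ι → ℚ≥0)
    (h : (∑ w, r w * r w) * (∑ w, m w * m w) = (∑ w, r w * m w) * (∑ w, r w * m w)) :
    ∀ w1 w2, r w1 * m w2 = r w2 * m w1 := by
  have hq : ((∑ w, (r w:ℚ) * (r w:ℚ)) * (∑ w, (m w:ℚ) * (m w:ℚ))
      = (∑ w, (r w:ℚ) * (m w:ℚ)) * (∑ w, (r w:ℚ) * (m w:ℚ))) := by exact_mod_cast h
  intro w1 w2
  exact_mod_cast lagrange_aux (fun w => (r w : ℚ)) (fun w => (m w : ℚ)) hq w1 w2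

lemma three_lambda {r1 r2 m1 m2 p1 p2 q1 q2 : ℚ}
    (h1 : (r1 + 1*m1) * (p2 + 1*q2) = (r2 + 1*m2) * (p1 + 1*q1))
    (h2 : (r1 + 2*m1) * (p2 + 2*q2) = (r2 + 2*m2) * (p1 + 2*q1))
    (h3 : (r1 + 3*m1) * (p2 + 3*q2) = (r2 + 3*m2) * (p1 + 3*q1)) :
    r1*p2 = r2*p1 ∧ r1*q2 + m1*p2 = r2*q1 + m2*p1 ∧ m1*q2 = m2*q1 := by
  refine ⟨?_, ?_, ?_⟩
  · linear_combination 3*h1 - 3*h2 + h3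
  · linear_combination (-5/2)*h1 + 4*h2 + (-3/2)*h3
  · linear_combination (1/2)*h1 - h2 + (1/2)*h3

end Algebra

section LemmaP
variable {D : Type} [Fintype D] [DecidableEq D] {𝓕 : Set (WFun D)}

omit [Fintype D] [DecidableEq D] in
lemma rowIns_ne {k : ℕ} (i : Fin (k+1)) (c c' : D) (z : Fin k → D) (t : Fin (k+1))
    (h : (t:ℕ) ≠ (i:ℕ)) : rowIns i c z t = rowIns i c' z t := by
  unfold rowIns
  rw [dif_neg h, dif_neg h]

def pairMap (l : ℕ) : Fin ((1+l)+(1+l)) → Fin (2+l) := fun j =>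
  if h0 : (j:ℕ) = 0 then ⟨0, by omega⟩
  else if h1 : (j:ℕ) < 1+l then ⟨(j:ℕ)+1, by have := j.isLt; omega⟩
  else if h2 : (j:ℕ) = 1+l then ⟨1, by omega⟩
  else ⟨(j:ℕ) - l, by have := j.isLt; omega⟩

omit [Fintype D] [DecidableEq D] in
lemma pairMap_left (l : ℕ) (v : Fin 2 → D) (w : Fin l → D) :
    (fun i : Fin (1+l) => Fin.append v w (pairMap l (Fin.castAdd (1+l) i)))
      = Fin.append (fun _ : Fin 1 => v 0) w := by
  funext i
  have hi := i.isLt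
  unfold pairMap
  simp only [Fin.coe_castAdd]
  by_cases e0 : (i:ℕ) = 0
  · rw [dif_pos e0, append_lt _ _ _ (by simp : ((⟨0, by omega⟩ : Fin (2+l)):ℕ) < 2),
      append_lt _ _ _ (by omega : (i:ℕ) < 1)]
    exact congrArg v (Fin.ext (by simp))
  · rw [dif_neg e0, dif_pos (by omega : (i:ℕ) < 1+l),
      append_ge _ _ _ (by simp; omega : 2 ≤ ((⟨(i:ℕ)+1, by omega⟩ : Fin (2+l)):ℕ)),
      append_ge _ _ _ (by omega : 1 ≤ (i:ℕ))]
    first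
      | rfl
      | (exact congrArg w (Fin.ext (by simp)))
      | (exact congrArg w (Fin.ext (by simp; omega)))

omit [Fintype D] [DecidableEq D] in
lemma pairMap_right (l : ℕ) (v : Fin 2 → D) (w : Fin l → D) :
    (fun i : Fin (1+l) => Fin.append v w (pairMap l (Fin.natAdd (1+l) i)))
      = Fin.append (fun _ : Fin 1 => v 1) w := by
  funext i
  have hi := i.isLt
  unfold pairMap
  simp only [Fin.coe_natAdd]
  by_cases e0 : (i:ℕ) = 0
  · rw [dif_neg (by omega), dif_neg (by omega), dif_pos (by omega : 1+l+(i:ℕ) = 1+l),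
      append_lt _ _ _ (by simp : ((⟨1, by omega⟩ : Fin (2+l)):ℕ) < 2),
      append_lt _ _ _ (by omega : (i:ℕ) < 1)]
    exact congrArg v (Fin.ext (by simp))
  · rw [dif_neg (by omega), dif_neg (by omega), dif_neg (by omega),
      append_ge _ _ _ (by simp; omega : 2 ≤ ((⟨1+l+(i:ℕ)-l, by have := i.isLt; omega⟩ : Fin (2+l)):ℕ)),
      append_ge _ _ _ (by omega : 1 ≤ (i:ℕ))]
    exact congrArg w (Fin.ext (by simp; omega))

/-- The key binary gadget `G(s,t) = ∑_w F(s,z̄,w) F(t,z̄,w)` and what weak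
log-modularity yields for it: rows differing only in coordinate 0 and sharing a
non-zero column are proportional. -/
lemma lemmaP (hcons : ∀ u : D → ℚ≥0, (⟨1, fun x => u (x 0)⟩ : WFun D) ∈ 𝓕)
    (hwlm : WeaklyLogModular 𝓕) :
    ∀ (k l : ℕ) (F : (Fin ((k+1)+l) → D) → ℚ≥0), InFClone 𝓕 F →
    ∀ x x' : Fin (k+1) → D, (∀ t : Fin (k+1), (t:ℕ) ≠ 0 → x t = x' t) →
    ∀ y0 : Fin l → D, F (Fin.append x y0) ≠ 0 → F (Fin.append x' y0) ≠ 0 →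
    ∀ y1 y2, F (Fin.append x y1) * F (Fin.append x' y2)
      = F (Fin.append x y2) * F (Fin.append x' y1) := by
  intro k
  induction k with
  | zero =>
    intro l F hF x x' _ y0 h0 h0' y1 y2
    -- the binary gadget
    have hmul := clone_mul hF hF
    have hren := clone_rename hmul (pairMap l)
    have hsum := clone_blockSum l _ hren
    set G : (Fin 2 → D) → ℚ≥0 := fun v : Fin 2 → D =>
      ∑ w : Fin l → D, F (Fin.append (fun _ : Fin 1 => v 0) w)
        * F (Fin.append (fun _ : Fin 1 => v 1) w) with hGdef
    have hG : InFClone 𝓕 G := by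
      refine hsum.congr fun v => Finset.sum_congr rfl fun w _ => ?_
      show _ = F (Fin.append (fun _ : Fin 1 => v 0) w) * F (Fin.append (fun _ : Fin 1 => v 1) w)
      rw [← pairMap_left l v w, ← pairMap_right l v w]
      rfl
    -- identify rows
    have hxv : ∀ (s : D), (fun _ : Fin 1 => s) = fun t : Fin 1 => (if True then s else s) := by
      intro s; rfl
    set r : (Fin l → D) → ℚ≥0 := fun w => F (Fin.append x w) with hrdef
    set m : (Fin l → D) → ℚ≥0 := fun w => F (Fin.append x' w) with hmdef
    have hx : (fun _ : Fin 1 => x 0) = x := funext fun t => by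
      rw [Subsingleton.elim (0 : Fin 1) t]
    have hx' : (fun _ : Fin 1 => x' 0) = x' := funext fun t => by
      rw [Subsingleton.elim (0 : Fin 1) t]
    have hGaa : G ![x 0, x' 0] = ∑ w, r w * m w := by
      simp only [hGdef, Matrix.cons_val_zero, Matrix.cons_val_one, Matrix.head_cons, hx, hx']
      rfl
    have hGa : G ![x 0, x 0] = ∑ w, r w * r w := by
      simp only [hGdef, Matrix.cons_val_zero, Matrix.cons_val_one, Matrix.head_cons, hx]
      rfl
    have hGb : G ![x' 0, x' 0] = ∑ w, m w * m w := by
      simp only [hGdef, Matrix.cons_val_zero, Matrix.cons_val_one, Matrix.head_cons, hx']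
      rfl
    have hGba : G ![x' 0, x 0] = ∑ w, m w * r w := by
      simp only [hGdef, Matrix.cons_val_zero, Matrix.cons_val_one, Matrix.head_cons, hx, hx']
      rfl
    rcases hwlm G hG (x 0) (x' 0) with hc | hc | hc
    · rw [hGa, hGb, hGaa, hGba] at hc
      have hc' : (∑ w, r w * r w) * (∑ w, m w * m w) = (∑ w, r w * m w) * (∑ w, r w * m w) := by
        rw [hc]
        congr 1
        exact Finset.sum_congr rfl fun w _ => mul_comm _ _
      exact cs_minors r m hc' y1 y2
    · exfalso
      rw [hGa] at hc
      have := (Finset.sum_eq_zero_iff).mp hc.1 y0 (Finset.mem_univ _)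
      exact h0 (mul_self_eq_zero.mp this)
    · exfalso
      rw [hGaa] at hc
      have := (Finset.sum_eq_zero_iff).mp hc.1 y0 (Finset.mem_univ _)
      rcases mul_eq_zero.mp this with h | h
      · exact h0 h
      · exact h0' h
  | succ k ih =>
    intro l F hF x x' hagree y0 h0 h0' y1 y2
    set i : Fin (k+2) := ⟨k+1, by omega⟩ with hidef
    have hxi : x' i = x i := (hagree i (by simp [hidef])).symm
    have hrow := clone_rowAgg hcons hF i (fun c => if c = x i then 1 else 0)
    set G1 : (Fin ((k+1)+l) → D) → ℚ≥0 :=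
      fun v => ∑ c : D, (if c = x i then 1 else 0) * F (expandI i c v) with hG1def
    have hval : ∀ (z : Fin (k+1) → D) (y : Fin l → D),
        G1 (Fin.append z y) = F (Fin.append (rowIns i (x i) z) y) := by
      intro z y
      rw [hG1def]
      simp only
      rw [Finset.sum_congr rfl (fun c _ => by rw [expandI_append])]
      exact sum_delta_one (x i) (fun c => F (Fin.append (rowIns i c z) y))
    have hd : ∀ y, F (Fin.append x y) = G1 (Fin.append (rowDel i x) y) := by
      intro y; rw [hval, rowIns_rowDel]
    have hd' : ∀ y, F (Fin.append x' y) = G1 (Fin.append (rowDel i x') y) := by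
      intro y; rw [hval]
      rw [show rowIns i (x i) (rowDel i x') = rowIns i (x' i) (rowDel i x') from by rw [hxi]]
      rw [rowIns_rowDel]
    have hagree1 : ∀ t : Fin (k+1), (t:ℕ) ≠ 0 → rowDel i x t = rowDel i x' t := by
      intro t ht
      have hlt : (t:ℕ) < (i:ℕ) := by
        have : (i:ℕ) = k+1 := rfl
        omega
      unfold rowDel
      rw [dif_pos hlt, dif_pos hlt]
      exact hagree ⟨(t:ℕ), by omega⟩ (fun hc => ht (by simpa using hc))
    rw [hd y1, hd y2, hd' y1, hd' y2]
    exact ih l G1 hrow (rowDel i x) (rowDel i x') hagree1 y0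
      (by rw [← hd]; exact h0) (by rw [← hd']; exact h0') y1 y2

end LemmaP

section KeyProp
variable {D : Type} [Fintype D] [DecidableEq D] {𝓕 : Set (WFun D)}

lemma keyProp (hcons : ∀ u : D → ℚ≥0, (⟨1, fun x => u (x 0)⟩ : WFun D) ∈ 𝓕)
    (hwlm : WeaklyLogModular 𝓕) :
    ∀ (k l : ℕ) (F : (Fin ((k+1)+l) → D) → ℚ≥0), InFClone 𝓕 F →
    ∀ (x x' : Fin (k+1) → D) (y0 : Fin l → D),
      F (Fin.append x y0) ≠ 0 → F (Fin.append x' y0) ≠ 0 →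
      ∀ y1 y2, F (Fin.append x y1) * F (Fin.append x' y2)
        = F (Fin.append x y2) * F (Fin.append x' y1) := by
  intro k
  induction k with
  | zero =>
    intro l F hF x x' y0 h0 h0' y1 y2
    exact lemmaP hcons hwlm 0 l F hF x x'
      (fun t ht => absurd (by have := t.isLt; omega : (t:ℕ) = 0) ht) y0 h0 h0' y1 y2
  | succ k ih =>
    intro l F hF x x' y0 h0 h0' y1 y2
    by_cases hex : ∃ i : Fin (k+2), x i = x' i
    · obtain ⟨i, hi⟩ := hex
      have hrow := clone_rowAgg hcons hF i (fun c => if c = x i then 1 else 0)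
      set G1 : (Fin ((k+1)+l) → D) → ℚ≥0 :=
        fun v => ∑ c : D, (if c = x i then 1 else 0) * F (expandI i c v) with hG1def
      have hval : ∀ (z : Fin (k+1) → D) (y : Fin l → D),
          G1 (Fin.append z y) = F (Fin.append (rowIns i (x i) z) y) := by
        intro z y
        rw [hG1def]
        simp only
        rw [Finset.sum_congr rfl (fun c _ => by rw [expandI_append])]
        exact sum_delta_one (x i) (fun c => F (Fin.append (rowIns i c z) y))
      have hd : ∀ y, F (Fin.append x y) = G1 (Fin.append (rowDel i x) y) := by
        intro y; rw [hval, rowIns_rowDel]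
      have hd' : ∀ y, F (Fin.append x' y) = G1 (Fin.append (rowDel i x') y) := by
        intro y; rw [hval]
        rw [show rowIns i (x i) (rowDel i x') = rowIns i (x' i) (rowDel i x') from by rw [hi]]
        rw [rowIns_rowDel]
      rw [hd y1, hd y2, hd' y1, hd' y2]
      exact ih l G1 hrow (rowDel i x) (rowDel i x') y0
        (by rw [← hd]; exact h0) (by rw [← hd']; exact h0') y1 y2
    · push_neg at hex
      set i : Fin (k+2) := ⟨0, by omega⟩ with hidef
      have hab : x i ≠ x' i := hex i
      have hxa : rowIns i (x i) (rowDel i x) = x := rowIns_rowDel i x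
      have hxb' : rowIns i (x' i) (rowDel i x') = x' := rowIns_rowDel i x'
      set xt := rowIns i (x' i) (rowDel i x) with hxtdef
      set xt' := rowIns i (x i) (rowDel i x') with hxt'def
      -- three-lambda identities
      have key : ∀ lam : ℚ≥0, lam ≠ 0 → ∀ w1 w2,
          (F (Fin.append x w1) + lam * F (Fin.append xt w1))
            * (F (Fin.append xt' w2) + lam * F (Fin.append x' w2))
          = (F (Fin.append x w2) + lam * F (Fin.append xt w2))
            * (F (Fin.append xt' w1) + lam * F (Fin.append x' w1)) := by
        intro lam hlam w1 w2
        have hrow := clone_rowAgg hcons hF i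
          (fun c => (if c = x i then 1 else 0) + lam * (if c = x' i then 1 else 0))
        set Gl : (Fin ((k+1)+l) → D) → ℚ≥0 := fun v =>
          ∑ c : D, ((if c = x i then 1 else 0) + lam * (if c = x' i then 1 else 0))
            * F (expandI i c v) with hGldef
        have hval : ∀ (z : Fin (k+1) → D) (y : Fin l → D),
            Gl (Fin.append z y)
              = F (Fin.append (rowIns i (x i) z) y) + lam * F (Fin.append (rowIns i (x' i) z) y) := by
          intro z y
          rw [hGldef]
          simp only
          rw [Finset.sum_congr rfl (fun c _ => by rw [expandI_append])]
          exact sum_delta_pair hab lam (fun c => F (Fin.append (rowIns i c z) y))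
        have h1 : Gl (Fin.append (rowDel i x) y0) ≠ 0 := by
          rw [hval, hxa]
          intro hc
          rw [add_eq_zero] at hc
          exact h0 hc.1
        have h2 : Gl (Fin.append (rowDel i x') y0) ≠ 0 := by
          rw [hval, hxb']
          intro hc
          rw [add_eq_zero] at hc
          rcases mul_eq_zero.mp hc.2 with h | h
          · exact hlam h
          · exact h0' h
        have hrec := ih l Gl hrow (rowDel i x) (rowDel i x') y0 h1 h2 w1 w2
        rw [hval, hval, hval, hval, hxa, hxb'] at hrec
        exact hrec
      -- coefficient extraction over ℚ
      have coeffs : ∀ w1 w2,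
          ((F (Fin.append x w1) : ℚ) * (F (Fin.append xt' w2) : ℚ)
            = (F (Fin.append x w2) : ℚ) * (F (Fin.append xt' w1) : ℚ))
          ∧ ((F (Fin.append x w1) : ℚ) * (F (Fin.append x' w2) : ℚ)
              + (F (Fin.append xt w1) : ℚ) * (F (Fin.append xt' w2) : ℚ)
            = (F (Fin.append x w2) : ℚ) * (F (Fin.append x' w1) : ℚ)
              + (F (Fin.append xt w2) : ℚ) * (F (Fin.append xt' w1) : ℚ))
          ∧ ((F (Fin.append xt w1) : ℚ) * (F (Fin.append x' w2) : ℚ)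
            = (F (Fin.append xt w2) : ℚ) * (F (Fin.append x' w1) : ℚ)) := by
        intro w1 w2
        have e1 := key 1 one_ne_zero w1 w2
        have e2 := key 2 two_ne_zero w1 w2
        have e3 := key 3 three_ne_zero w1 w2
        have q1 : ((F (Fin.append x w1) : ℚ) + 1*(F (Fin.append xt w1) : ℚ))
            * ((F (Fin.append xt' w2) : ℚ) + 1*(F (Fin.append x' w2) : ℚ))
            = ((F (Fin.append x w2) : ℚ) + 1*(F (Fin.append xt w2) : ℚ))
            * ((F (Fin.append xt' w1) : ℚ) + 1*(F (Fin.append x' w1) : ℚ)) := by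
          exact_mod_cast e1
        have q2 : ((F (Fin.append x w1) : ℚ) + 2*(F (Fin.append xt w1) : ℚ))
            * ((F (Fin.append xt' w2) : ℚ) + 2*(F (Fin.append x' w2) : ℚ))
            = ((F (Fin.append x w2) : ℚ) + 2*(F (Fin.append xt w2) : ℚ))
            * ((F (Fin.append xt' w1) : ℚ) + 2*(F (Fin.append x' w1) : ℚ)) := by
          exact_mod_cast e2
        have q3 : ((F (Fin.append x w1) : ℚ) + 3*(F (Fin.append xt w1) : ℚ))
            * ((F (Fin.append xt' w2) : ℚ) + 3*(F (Fin.append x' w2) : ℚ))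
            = ((F (Fin.append x w2) : ℚ) + 3*(F (Fin.append xt w2) : ℚ))
            * ((F (Fin.append xt' w1) : ℚ) + 3*(F (Fin.append x' w1) : ℚ)) := by
          exact_mod_cast e3
        exact three_lambda q1 q2 q3
      -- final algebra
      have hR0 : (F (Fin.append x y0) : ℚ) ≠ 0 := by exact_mod_cast h0
      have hRR0 : (F (Fin.append x' y0) : ℚ) ≠ 0 := by exact_mod_cast h0'
      obtain ⟨hC1, hB11, hA1⟩ := coeffs y1 y0
      obtain ⟨hC2, hB22, hA2⟩ := coeffs y2 y0
      obtain ⟨hC12, hB, hA12⟩ := coeffs y1 y2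
      have goalcast : ((F (Fin.append x y1) : ℚ) * (F (Fin.append x' y2) : ℚ)
          = (F (Fin.append x y2) : ℚ) * (F (Fin.append x' y1) : ℚ)) →
          F (Fin.append x y1) * F (Fin.append x' y2)
            = F (Fin.append x y2) * F (Fin.append x' y1) := by
        intro h; exact_mod_cast h
      apply goalcast
      by_cases hcc : (F (Fin.append xt y0) : ℚ) * (F (Fin.append xt' y0) : ℚ)
          = (F (Fin.append x y0) : ℚ) * (F (Fin.append x' y0) : ℚ)
      · -- degenerate case: use lemmaP on rows x and xt
        have hM0 : (F (Fin.append xt y0) : ℚ) ≠ 0 := by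
          intro hz
          rw [hz, zero_mul] at hcc
          exact mul_ne_zero hR0 hRR0 hcc.symm
        have hagx : ∀ t : Fin (k+2), (t:ℕ) ≠ 0 → x t = xt t := by
          intro t ht
          rw [← hxa, hxtdef]
          exact rowIns_ne i (x i) (x' i) (rowDel i x) t (by rw [hidef]; simpa using ht)
        have hM0' : F (Fin.append xt y0) ≠ 0 := by exact_mod_cast hM0
        have hmin := lemmaP hcons hwlm (k+1) l F hF x xt hagx y0 h0 hM0' y1 y2
        have hm : (F (Fin.append x y1) : ℚ) * (F (Fin.append xt y2) : ℚ)
            = (F (Fin.append x y2) : ℚ) * (F (Fin.append xt y1) : ℚ) := by exact_mod_cast hmin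
        have hgoal : ((F (Fin.append xt y0) : ℚ) * (F (Fin.append x' y0) : ℚ))
            * ((F (Fin.append x y1) : ℚ) * (F (Fin.append x' y2) : ℚ))
            = ((F (Fin.append xt y0) : ℚ) * (F (Fin.append x' y0) : ℚ))
            * ((F (Fin.append x y2) : ℚ) * (F (Fin.append x' y1) : ℚ)) := by
          linear_combination (-((F (Fin.append x y1):ℚ)*(F (Fin.append x' y0):ℚ)))*hA2
            + ((F (Fin.append x y2):ℚ)*(F (Fin.append x' y0):ℚ))*hA1
            + ((F (Fin.append x' y0):ℚ)^2)*hm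
        exact mul_left_cancel₀ (mul_ne_zero hM0 hRR0) hgoal
      · -- generic case
        have key2 : ((F (Fin.append x y0):ℚ)*(F (Fin.append x' y0):ℚ)
              - (F (Fin.append xt y0):ℚ)*(F (Fin.append xt' y0):ℚ))
            * ((F (Fin.append x y1):ℚ)*(F (Fin.append x' y2):ℚ)
              - (F (Fin.append x y2):ℚ)*(F (Fin.append x' y1):ℚ)) = 0 := by
          linear_combination ((F (Fin.append x y0):ℚ)*(F (Fin.append x' y0):ℚ))*hB
            + ((F (Fin.append xt' y1):ℚ)*(F (Fin.append x y0):ℚ))*hA2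
            - ((F (Fin.append xt y0):ℚ)*(F (Fin.append x' y2):ℚ))*hC1
            - ((F (Fin.append xt' y2):ℚ)*(F (Fin.append x y0):ℚ))*hA1
            + ((F (Fin.append xt y0):ℚ)*(F (Fin.append x' y1):ℚ))*hC2
        rcases mul_eq_zero.mp key2 with h | h
        · exact absurd (by linarith [h] : (F (Fin.append x y0):ℚ)*(F (Fin.append x' y0):ℚ)
            = (F (Fin.append xt y0):ℚ)*(F (Fin.append xt' y0):ℚ)) (fun hh => hcc hh.symm)
        · linarith [h]

end KeyProp

section Final
variable {D : Type} [Fintype D] [DecidableEq D]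

/-- Invariant propagated along walks starting at row `x`. -/
def GoodP {X Y : Type*} (M : X → Y → ℚ≥0) (x : X) : X ⊕ Y → Prop
  | Sum.inl x'' => x'' = x ∨ ∃ y0, M x y0 ≠ 0 ∧ M x'' y0 ≠ 0
  | Sum.inr y' => M x y' ≠ 0

theorem conservative_weaklyLogModular_balanced'
    (hD : 2 ≤ Fintype.card D)
    (𝓕 : Set (WFun D))
    (hcons : ∀ u : D → ℚ≥0, (⟨1, fun x => u (x 0)⟩ : WFun D) ∈ 𝓕)
    (hwlm : WeaklyLogModular 𝓕) :
    BalancedLang 𝓕 := by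
  intro k l hk hl F hF
  classical
  obtain ⟨k', rfl⟩ : ∃ k', k = k'+1 := ⟨k-1, by omega⟩
  haveI hDne : Nonempty D := Fintype.card_pos_iff.mp (by omega)
  set X := (Fin (k'+1) → D)
  set Y := (Fin l → D)
  haveI : Nonempty X := ⟨fun _ => Classical.arbitrary D⟩
  haveI : Nonempty Y := ⟨fun _ => Classical.arbitrary D⟩
  set M : X → Y → ℚ≥0 := fun x y => F (Fin.append x y) with hM
  have minors : ∀ (x x' : X) (y0 : Y), M x y0 ≠ 0 → M x' y0 ≠ 0 →
      ∀ y1 y2, M x y1 * M x' y2 = M x y2 * M x' y1 := fun x x' y0 h h' =>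
    keyProp hcons hwlm k' l F hF x x' y0 h h'
  set adj := MatAdj M with hadj
  have hsymm : ∀ p q, adj p q → adj q p := by
    intro p q h
    cases p <;> cases q <;> simp [hadj, MatAdj] at h ⊢ <;> exact h
  set E := Relation.ReflTransGen adj with hE
  have hEsymm : ∀ {p q}, E p q → E q p :=
    fun h => by haveI : Std.Symm adj := ⟨hsymm⟩; exact (Relation.ReflTransGen.stdSymm (r := adj)).symm _ _ h
  -- connected pairs are non-zero
  have reachGood : ∀ (x : X) (p : X ⊕ Y), E (Sum.inl x) p → GoodP M x p := by
    intro x p hp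
    induction hp with
    | refl => exact Or.inl rfl
    | @tail b c hb hbc ih =>
      cases b with
      | inl x'' =>
        cases c with
        | inl z => exact absurd hbc (by simp [hadj, MatAdj])
        | inr y' =>
          have hbc' : M x'' y' ≠ 0 := hbc
          rcases ih with rfl | ⟨y0, hxy0, hx''y0⟩
          · exact hbc'
          · show M x y' ≠ 0
            intro hzero
            have h5 := minors x x'' y0 hxy0 hx''y0 y' y0
            rw [hzero, zero_mul] at h5
            exact mul_ne_zero hxy0 hbc' h5.symm
      | inr y' =>
        cases c with
        | inr z => exact absurd hbc (by simp [hadj, MatAdj])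
        | inl x'' => exact Or.inr ⟨y', ih, hbc⟩
  have reach : ∀ (x : X) (y : Y), E (Sum.inl x) (Sum.inr y) → M x y ≠ 0 :=
    fun x y h => reachGood x _ h
  -- component representatives
  set S : Setoid (X ⊕ Y) :=
    ⟨E, ⟨fun _ => Relation.ReflTransGen.refl, fun h => hEsymm h, fun h1 h2 => h1.trans h2⟩⟩
    with hS
  set rep : X ⊕ Y → X ⊕ Y := fun p => (Quotient.mk S p).out with hrep
  have hrep1 : ∀ p, E (rep p) p := by
    intro p
    have := Quotient.out_eq (Quotient.mk S p)
    exact Quotient.exact (s := S) this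
  have hrep2 : ∀ p q, E p q → rep p = rep q := by
    intro p q hpq
    show (Quotient.mk S p).out = (Quotient.mk S q).out
    rw [Quotient.sound (s := S) hpq]
  -- choices
  set ycol : X ⊕ Y → Y := fun p =>
    if h : ∃ y', E p (Sum.inr y') then Classical.choose h else Classical.arbitrary Y
    with hycol
  set xr : Y → X := fun y =>
    if h : ∃ x', E (Sum.inl x') (Sum.inr y) then Classical.choose h else Classical.arbitrary X
    with hxr
  refine ⟨fun x => M x (ycol (rep (Sum.inl x))),
          fun y => M (xr y) y / M (xr y) (ycol (rep (Sum.inl (xr y)))), ?_⟩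
  intro x y hxy
  show M x y = M x (ycol (rep (Sum.inl x)))
      * (M (xr y) y / M (xr y) (ycol (rep (Sum.inl (xr y)))))
  have hxrE : E (Sum.inl (xr y)) (Sum.inr y) := by
    rw [hxr]
    simp only
    rw [dif_pos ⟨x, hxy⟩]
    exact Classical.choose_spec (⟨x, hxy⟩ : ∃ x', E (Sum.inl x') (Sum.inr y))
  have hrepeq : rep (Sum.inl x) = rep (Sum.inl (xr y)) :=
    hrep2 _ _ (hxy.trans (hEsymm hxrE))
  have hpx : E (rep (Sum.inl x)) (Sum.inl x) := hrep1 _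
  have hpy : ∃ y', E (rep (Sum.inl x)) (Sum.inr y') := ⟨y, hpx.trans hxy⟩
  have ht0 : E (rep (Sum.inl x)) (Sum.inr (ycol (rep (Sum.inl x)))) := by
    rw [hycol]
    simp only
    rw [dif_pos hpy]
    exact Classical.choose_spec hpy
  set t0 := ycol (rep (Sum.inl x)) with ht0def
  have hxt0 : E (Sum.inl x) (Sum.inr t0) := (hEsymm hpx).trans ht0
  have hxrt0 : E (Sum.inl (xr y)) (Sum.inr t0) := by
    have h1 : E (rep (Sum.inl (xr y))) (Sum.inl (xr y)) := hrep1 _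
    rw [← hrepeq] at h1
    exact (hEsymm h1).trans ht0
  have hMxy : M x y ≠ 0 := reach _ _ hxy
  have hMxt0 : M x t0 ≠ 0 := reach _ _ hxt0
  have hMxry : M (xr y) y ≠ 0 := reach _ _ hxrE
  have hMxrt0 : M (xr y) t0 ≠ 0 := reach _ _ hxrt0
  rw [← hrepeq]
  rw [← ht0def]
  have hmin := minors x (xr y) y hMxy hMxry t0 y
  rw [mul_div_assoc']
  rw [hmin]
  rw [mul_div_assoc]
  rw [div_self hMxrt0, mul_one]

end Final

/-- Every conservative, weakly log-modular weighted constraint language is balanced. -/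
theorem conservative_weaklyLogModular_balanced
    {D : Type} [Fintype D] [DecidableEq D] (hD : 2 ≤ Fintype.card D)
    (𝓕 : Set (WFun D))
    (hcons : ∀ u : D → ℚ≥0, (⟨1, fun x => u (x 0)⟩ : WFun D) ∈ 𝓕)
    (hwlm : WeaklyLogModular 𝓕) :
    BalancedLang 𝓕 :=
  conservative_weaklyLogModular_balanced' hD 𝓕 hcons hwlm
end

section
/- Let H be a finite weighted constraint language over a finite domain D taking values in ℚ≥0. Let U_D be the set of all unary functions D → ℚ≥0 and let U'_D be the set of all unary functions D → {1,2}. Then the following are equivalent: (1) H ∪ U'_D is balanced; (2) every finite subset of H ∪ U_D is balanced; (3) H ∪ U_D is balanced. -/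
open scoped NNRat

section AuxLemmas

lemma matAdj_symm {R C α : Type*} [Zero α] (M : R → C → α) : Symmetric (MatAdj M) := by
  intro a b h
  cases a <;> cases b <;> simp_all [MatAdj]

lemma conn_symm {R C α : Type*} [Zero α] (M : R → C → α) :
    Symmetric (Relation.ReflTransGen (MatAdj M)) :=
  fun a b h => by
    induction h with
    | refl => exact Relation.ReflTransGen.refl
    | tail _ hbc ih => exact Relation.ReflTransGen.head (matAdj_symm M hbc) ih

lemma blockRank1_of_minors {R C : Type*} (M : R → C → ℚ≥0)
    (h : ∀ r r' c c', Relation.ReflTransGen (MatAdj M) (Sum.inl r) (Sum.inr c) →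
      Relation.ReflTransGen (MatAdj M) (Sum.inl r') (Sum.inr c') →
      Relation.ReflTransGen (MatAdj M) (Sum.inl r) (Sum.inr c') →
      M r c * M r' c' = M r c' * M r' c) :
    BlockRank1 M := by
  classical
  set conn := Relation.ReflTransGen (MatAdj M) with hconn_def
  letI s : Setoid (R ⊕ C) := ⟨conn, ⟨fun _ => Relation.ReflTransGen.refl,
    fun hab => conn_symm M hab, fun hab hbc => hab.trans hbc⟩⟩
  let base : R ⊕ C → R ⊕ C := fun n => (Quotient.mk s n).out
  have hbase : ∀ n, conn (base n) n := fun n => Quotient.mk_out n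
  have hbase_eq : ∀ n n', conn n n' → base n = base n' := by
    intro n n' hnn'
    show (Quotient.mk s n).out = (Quotient.mk s n').out
    rw [Quotient.sound hnn']
  let Ed : R ⊕ C → Prop := fun q => ∃ p : R × C, conn q (Sum.inl p.1) ∧ M p.1 p.2 ≠ 0
  refine ⟨fun r => if h : Ed (base (Sum.inl r)) then M r h.choose.2 else 0,
          fun c => if h : Ed (base (Sum.inr c)) then
            M h.choose.1 c / M h.choose.1 h.choose.2 else 0, ?_⟩
  intro r c hrc
  obtain ⟨r1, hr1conn, hr1adj⟩ : ∃ r1 : R, conn (Sum.inl r) (Sum.inl r1) ∧ M r1 c ≠ 0 := by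
    rcases (Relation.ReflTransGen.cases_tail hrc) with heq | ⟨b, hb, hstep⟩
    · exact absurd heq (by simp)
    · cases b with
      | inl r1 => exact ⟨r1, hb, hstep⟩
      | inr c1 => exact absurd hstep (by simp [MatAdj])
  have hEd : Ed (base (Sum.inl r)) :=
    ⟨(r1, c), (hbase (Sum.inl r)).trans hr1conn, hr1adj⟩
  have hbb : base (Sum.inr c) = base (Sum.inl r) := (hbase_eq _ _ hrc).symm
  show M r c = (if h : Ed (base (Sum.inl r)) then M r h.choose.2 else 0) *
    (if h : Ed (base (Sum.inr c)) then M h.choose.1 c / M h.choose.1 h.choose.2 else 0)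
  rw [hbb, dif_pos hEd, dif_pos hEd]
  obtain ⟨hconn0, hM0⟩ := hEd.choose_spec
  set r0 := hEd.choose.1 with hr0
  set c0 := hEd.choose.2 with hc0
  have hcc : conn (Sum.inl r) (Sum.inr c0) := by
    refine ((conn_symm M (hbase (Sum.inl r))).trans hconn0).trans ?_
    exact Relation.ReflTransGen.single hM0
  have hr0c0 : conn (Sum.inl r0) (Sum.inr c0) := Relation.ReflTransGen.single hM0
  have hminor := h r r0 c c0 hrc hr0c0 hcc
  rw [← mul_div_assoc, ← hminor, mul_div_assoc, div_self hM0, mul_one]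

lemma mv_eval_eq_zero_of_grid {ι : Type} [Fintype ι] [DecidableEq ι]
    (p : MvPolynomial ι ℚ) (S : Set ℚ) (hS : S.Infinite)
    (h : ∀ u : ι → ℚ, (∀ i, u i ∈ S) → MvPolynomial.eval u p = 0) :
    ∀ u, MvPolynomial.eval u p = 0 := by
  classical
  suffices H : ∀ T : Finset ι, ∀ u : ι → ℚ, (∀ i ∉ T, u i ∈ S) → MvPolynomial.eval u p = 0 by
    intro u; exact H Finset.univ u (by simp)
  intro T
  induction T using Finset.induction_on with
  | empty => intro u hu; exact h u fun i => hu i (by simp)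
  | @insert a T ha IH =>
    intro u hu
    let φ : MvPolynomial ι ℚ →+* Polynomial ℚ :=
      (MvPolynomial.aeval (fun i => if i = a then Polynomial.X else Polynomial.C (u i))).toRingHom
    have hφ : ∀ (t : ℚ) (q : MvPolynomial ι ℚ),
        Polynomial.eval t (φ q) = MvPolynomial.eval (Function.update u a t) q := by
      intro t q
      have : (Polynomial.evalRingHom t).comp φ
          = (MvPolynomial.eval (Function.update u a t) : MvPolynomial ι ℚ →+* ℚ) := by
        apply MvPolynomial.ringHom_ext
        · intro r; simp [φ]
        · intro i; simp [φ, Function.update_apply, apply_ite (Polynomial.eval t)]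
      exact RingHom.congr_fun this q
    have hroot : φ p = 0 := by
      apply Polynomial.eq_zero_of_infinite_isRoot
      apply hS.mono
      intro t ht
      show Polynomial.IsRoot (φ p) t
      have := IH (Function.update u a t) ?_
      · simpa [Polynomial.IsRoot, hφ] using this
      · intro i hi
        rcases eq_or_ne i a with rfl | hne
        · simpa using ht
        · rw [Function.update_apply, if_neg hne]
          exact hu i (by simp [hne, hi])
    have := hφ (u a) p
    rw [hroot, Function.update_eq_self] at this
    simpa using this.symm

lemma prod_ite_two {N E : ℕ} (h : E ≤ N) :
    ∏ s : Fin N, (if (s : ℕ) < E then (2:ℚ≥0) else 1) = 2 ^ E := by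
  have key : ∀ n : ℕ, ∏ s ∈ Finset.range n, (if s < E then (2:ℚ≥0) else 1) = 2 ^ min E n := by
    intro n
    induction n with
    | zero => simp
    | succ n IH =>
      rw [Finset.prod_range_succ, IH]
      rcases lt_or_ge n E with hlt | hge
      · rw [if_pos hlt, min_eq_right hlt.le, min_eq_right (Nat.succ_le_of_lt hlt), pow_succ]
      · rw [if_neg (not_lt.mpr hge), min_eq_left hge,
          min_eq_left (hge.trans (Nat.le_succ n)), mul_one]
  rw [Fin.prod_univ_eq_prod_range (fun s => if s < E then (2:ℚ≥0) else 1) N, key, min_eq_left h]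

lemma sigma_unary {D : Type} {a : ℕ} {G : (Fin a → D) → ℚ≥0} {uu : D → ℚ≥0}
    (h : (⟨a, G⟩ : WFun D) = ⟨1, fun x => uu (x 0)⟩) (ha : a = 1) :
    ∀ v : Fin a → D, G v = uu (v (Fin.cast ha.symm 0)) := by
  subst ha
  have h2 : G = fun x => uu (x 0) := eq_of_heq (Sigma.mk.inj_iff.mp h).2
  intro v; rw [h2]; simp

lemma inFClone_mono {D : Type} [Fintype D] [DecidableEq D] {𝓕 𝓖 : Set (WFun D)} (h : 𝓕 ⊆ 𝓖)
    {n : ℕ} {F : (Fin n → D) → ℚ≥0} (hF : InFClone 𝓕 F) : InFClone 𝓖 F := by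
  obtain ⟨k, m, ar, G, sc, hmem, heq⟩ := hF
  exact ⟨k, m, ar, G, sc, fun j => (hmem j).imp (fun hj => h hj) id, heq⟩

lemma balanced_anti {D : Type} [Fintype D] [DecidableEq D] {𝓕 𝓖 : Set (WFun D)} (h : 𝓖 ⊆ 𝓕)
    (hb : BalancedLang 𝓕) : BalancedLang 𝓖 :=
  fun k l hk hl F hF => hb k l hk hl F (inFClone_mono h hF)

lemma balanced_of_finite_subsets {D : Type} [Fintype D] [DecidableEq D] (𝓕 : Set (WFun D))
    (h : ∀ 𝓖 ⊆ 𝓕, 𝓖.Finite → BalancedLang 𝓖) : BalancedLang 𝓕 := by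
  intro k l hk hl F hF
  obtain ⟨b, m, ar, G, sc, hmem, heq⟩ := hF
  refine h (𝓕 ∩ Set.range (fun j : Fin m => (⟨ar j, G j⟩ : WFun D))) Set.inter_subset_left
    ((Set.finite_range _).inter_of_right 𝓕) k l hk hl F ⟨b, m, ar, G, sc, ?_, heq⟩
  intro j
  rcases hmem j with hj | hj
  · exact Or.inl ⟨hj, ⟨j, rfl⟩⟩
  · exact Or.inr hj

lemma unary12_finite (D : Type) [Fintype D] [DecidableEq D] :
    {G : WFun D | ∃ u : D → ℚ≥0, (∀ d, u d = 1 ∨ u d = 2) ∧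
      G = ⟨1, fun x => u (x 0)⟩}.Finite := by
  have h1 : {u : D → ℚ≥0 | ∀ d, u d = 1 ∨ u d = 2}.Finite := by
    have hsub : {u : D → ℚ≥0 | ∀ d, u d = 1 ∨ u d = 2} ⊆
        Set.univ.pi (fun _ : D => ({1, 2} : Set ℚ≥0)) := by
      intro u hu d _
      rcases hu d with h | h <;> simp [h]
    exact (Set.Finite.pi (fun _ => (Set.finite_singleton _).insert _)).subset hsub
  have hsub : {G : WFun D | ∃ u : D → ℚ≥0, (∀ d, u d = 1 ∨ u d = 2) ∧ G = ⟨1, fun x => u (x 0)⟩}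
      ⊆ (fun u : D → ℚ≥0 => (⟨1, fun x => u (x 0)⟩ : WFun D)) '' {u | ∀ d, u d = 1 ∨ u d = 2} := by
    rintro G ⟨u, hu, rfl⟩
    exact ⟨u, hu, rfl⟩
  exact (h1.image _).subset hsub

lemma inFClone_of_mixed {D : Type} [Fintype D] [DecidableEq D] (𝓕 : Set (WFun D))
    {n b m : ℕ} (ar : Fin m → ℕ) (G : ∀ j, (Fin (ar j) → D) → ℚ≥0)
    (sc : ∀ j, Fin (ar j) → Fin (n + b)) (A : Fin m → Prop) [DecidablePred A]
    (hmem : ∀ j, A j → ((⟨ar j, G j⟩ : WFun D) ∈ 𝓕 ∨ (⟨ar j, G j⟩ : WFun D) = ⟨2, EQw D⟩))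
    (hU : ∀ u : D → ℚ≥0, (∀ d, u d = 1 ∨ u d = 2) → (⟨1, fun x => u (x 0)⟩ : WFun D) ∈ 𝓕)
    (e : Fin m → D → ℕ) (w : ∀ j, ¬ A j → Fin (n + b))
    (F : (Fin n → D) → ℚ≥0)
    (hF : ∀ x, F x = ∑ z : Fin b → D, ∏ j : Fin m,
      (if hj : A j then G j (fun i => Fin.append x z (sc j i))
       else 2 ^ e j (Fin.append x z (w j hj)))) :
    InFClone 𝓕 F := by
  classical
  let cnt : Fin m → ℕ := fun j => if A j then 1 else Finset.univ.sup fun d : D => e j d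
  let atomFull : (Σ j : Fin m, Fin (cnt j)) → Σ' wf : WFun D, Fin wf.1 → Fin (n + b) :=
    fun σ => if hj : A σ.1 then ⟨⟨ar σ.1, G σ.1⟩, sc σ.1⟩
      else ⟨⟨1, fun x => if (σ.2 : ℕ) < e σ.1 (x 0) then 2 else 1⟩, fun _ => w σ.1 hj⟩
  have atomFull_pos : ∀ σ (h : A σ.1), atomFull σ = ⟨⟨ar σ.1, G σ.1⟩, sc σ.1⟩ :=
    fun σ h => dif_pos h
  have atomFull_neg : ∀ σ (h : ¬ A σ.1), atomFull σ =
      ⟨⟨1, fun x => if (σ.2 : ℕ) < e σ.1 (x 0) then 2 else 1⟩, fun _ => w σ.1 h⟩ :=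
    fun σ h => dif_neg h
  let eqv : (Σ j : Fin m, Fin (cnt j)) ≃ Fin (Fintype.card (Σ j : Fin m, Fin (cnt j))) :=
    Fintype.equivFin _
  refine ⟨b, Fintype.card (Σ j : Fin m, Fin (cnt j)),
    fun t => (atomFull (eqv.symm t)).1.1, fun t => (atomFull (eqv.symm t)).1.2,
    fun t => (atomFull (eqv.symm t)).2, ?_, ?_⟩
  · intro t
    show ((atomFull (eqv.symm t)).1 ∈ 𝓕) ∨ ((atomFull (eqv.symm t)).1 = ⟨2, EQw D⟩)
    by_cases hj : A (eqv.symm t).1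
    · rw [atomFull_pos _ hj]
      exact hmem _ hj
    · rw [atomFull_neg _ hj]
      refine Or.inl (hU (fun d => if ((eqv.symm t).2 : ℕ) < e (eqv.symm t).1 d then 2 else 1) ?_)
      intro d
      by_cases h : ((eqv.symm t).2 : ℕ) < e (eqv.symm t).1 d <;> simp [h]
  · intro x
    rw [hF x]
    refine Finset.sum_congr rfl fun z _ => ?_
    have hprod : ∀ g : (Σ j : Fin m, Fin (cnt j)) → ℚ≥0,
        (∏ t : Fin (Fintype.card (Σ j : Fin m, Fin (cnt j))), g (eqv.symm t)) =
          ∏ j : Fin m, ∏ s : Fin (cnt j), g ⟨j, s⟩ := by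
      intro g
      rw [← Equiv.prod_comp eqv (fun t => g (eqv.symm t))]
      simp only [Equiv.symm_apply_apply]
      rw [← Finset.univ_sigma_univ, Finset.prod_sigma]
    rw [hprod (fun σ => (atomFull σ).1.2 (fun i => Fin.append x z ((atomFull σ).2 i)))]
    refine Finset.prod_congr rfl fun j _ => ?_
    by_cases hj : A j
    · rw [dif_pos hj]
      have hc : ∀ s : Fin (cnt j),
          (atomFull ⟨j, s⟩).1.2 (fun i => Fin.append x z ((atomFull ⟨j, s⟩).2 i)) =
            G j (fun i => Fin.append x z (sc j i)) := by
        intro s; rw [atomFull_pos ⟨j, s⟩ hj]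
      rw [Finset.prod_congr rfl (fun s _ => hc s), Finset.prod_const,
        Finset.card_univ, Fintype.card_fin, show cnt j = 1 from if_pos hj, pow_one]
    · rw [dif_neg hj]
      have hc : ∀ s : Fin (cnt j),
          (atomFull ⟨j, s⟩).1.2 (fun i => Fin.append x z ((atomFull ⟨j, s⟩).2 i)) =
            (if (s : ℕ) < e j (Fin.append x z (w j hj)) then (2:ℚ≥0) else 1) := by
        intro s; rw [atomFull_neg ⟨j, s⟩ hj]
      rw [Finset.prod_congr rfl (fun s _ => hc s)]
      refine (prod_ite_two ?_).symm
      calc e j (Fin.append x z (w j hj)) ≤ Finset.univ.sup fun d : D => e j d :=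
            Finset.le_sup (Finset.mem_univ _)
      _ = cnt j := (if_neg hj).symm

lemma main_one_three {D : Type} [Fintype D] [DecidableEq D] (𝓗 : Set (WFun D))
    (bal : BalancedLang (𝓗 ∪ {G : WFun D | ∃ u : D → ℚ≥0, (∀ d, u d = 1 ∨ u d = 2) ∧
        G = ⟨1, fun x => u (x 0)⟩})) :
    BalancedLang (𝓗 ∪ {G : WFun D | ∃ u : D → ℚ≥0, G = ⟨1, fun x => u (x 0)⟩}) := by
  classical
  intro k l hk hl F hF
  obtain ⟨b, m, ar, G, sc, hmem, heq⟩ := hF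
  -- classification of the atoms
  set A : Fin m → Prop :=
    fun j => (⟨ar j, G j⟩ : WFun D) ∈ 𝓗 ∨ (⟨ar j, G j⟩ : WFun D) = ⟨2, EQw D⟩ with hA
  have hcase : ∀ j, ¬ A j → ∃ uu : D → ℚ≥0, (⟨ar j, G j⟩ : WFun D) = ⟨1, fun x => uu (x 0)⟩ := by
    intro j hj
    rcases hmem j with (h1 | h1) | h1
    · exact absurd (Or.inl h1) hj
    · exact h1
    · exact absurd (Or.inr h1) hj
  let u : ∀ j, ¬ A j → (D → ℚ≥0) := fun j hj => (hcase j hj).choose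
  have har : ∀ j (hj : ¬ A j), ar j = 1 :=
    fun j hj => (Sigma.mk.inj_iff.mp (hcase j hj).choose_spec).1
  let w : ∀ j, ¬ A j → Fin (k + l + b) := fun j hj => sc j (Fin.cast (har j hj).symm 0)
  have hGu : ∀ j (hj : ¬ A j) (v : Fin (k + l + b) → D),
      G j (fun i => v (sc j i)) = u j hj (v (w j hj)) :=
    fun j hj v => sigma_unary (hcase j hj).choose_spec (har j hj) _
  -- the master function with unary weights as parameters
  set ι : Type := Fin m × D with hι
  let Fp : (ι → ℚ≥0) → (Fin (k + l) → D) → ℚ≥0 := fun p x =>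
    ∑ z : Fin b → D, ∏ j : Fin m,
      (if hj : A j then G j (fun i => Fin.append x z (sc j i))
        else p (j, Fin.append x z (w j hj)))
  let p₀ : ι → ℚ≥0 := fun q => if hj : A q.1 then 1 else u q.1 hj q.2
  have hFp₀ : ∀ x, F x = Fp p₀ x := by
    intro x
    rw [heq]
    refine Finset.sum_congr rfl fun z _ => Finset.prod_congr rfl fun j _ => ?_
    by_cases hj : A j
    · simp only [Fp, dif_pos hj]
    · simp only [Fp, p₀, dif_neg hj]
      exact hGu j hj (Fin.append x z)
  -- the entries as polynomials in the parameters
  let qP : (Fin (k + l) → D) → MvPolynomial ι ℚ≥0 := fun x =>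
    ∑ z : Fin b → D, ∏ j : Fin m,
      (if hj : A j then MvPolynomial.C (G j (fun i => Fin.append x z (sc j i)))
        else MvPolynomial.X (j, Fin.append x z (w j hj)))
  have heval : ∀ (p : ι → ℚ≥0) x, MvPolynomial.eval p (qP x) = Fp p x := by
    intro p x
    simp only [qP, Fp, map_sum, map_prod]
    refine Finset.sum_congr rfl fun z _ => Finset.prod_congr rfl fun j _ => ?_
    by_cases hj : A j
    · rw [dif_pos hj, dif_pos hj, MvPolynomial.eval_C]
    · rw [dif_neg hj, dif_neg hj, MvPolynomial.eval_X]
  -- monotonicity in the parameters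
  have hmono : ∀ p p' : ι → ℚ≥0, p ≤ p' → ∀ x, Fp p x ≤ Fp p' x := by
    intro p p' hpp x
    refine Finset.sum_le_sum fun z _ => Finset.prod_le_prod' fun j _ => ?_
    by_cases hj : A j
    · rw [dif_pos hj, dif_pos hj]
    · rw [dif_neg hj, dif_neg hj]
      exact hpp _
  have hne_mono : ∀ p p' : ι → ℚ≥0, p ≤ p' → ∀ x, Fp p x ≠ 0 → Fp p' x ≠ 0 := by
    intro p p' hpp x hne h0
    exact hne (le_antisymm (h0 ▸ hmono p p' hpp x) (by simp))
  -- zero pattern for strictly positive parameters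
  have hpos_iff : ∀ p : ι → ℚ≥0, (∀ q, p q ≠ 0) → ∀ x,
      (Fp p x = 0 ↔ ∀ z : Fin b → D, ∃ j, ∃ hj : A j,
        G j (fun i => Fin.append x z (sc j i)) = 0) := by
    intro p hp x
    constructor
    · intro h0 z
      have hz := (Finset.sum_eq_zero_iff.mp h0) z (Finset.mem_univ z)
      obtain ⟨j, -, hj0⟩ := Finset.prod_eq_zero_iff.mp hz
      by_cases hj : A j
      · refine ⟨j, hj, ?_⟩
        rwa [dif_pos hj] at hj0
      · rw [dif_neg hj] at hj0
        exact absurd hj0 (hp _)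
    · intro hz
      refine Finset.sum_eq_zero fun z _ => ?_
      obtain ⟨j, hj, h0⟩ := hz z
      refine Finset.prod_eq_zero (Finset.mem_univ j) ?_
      rw [dif_pos hj, h0]
  have hposne : ∀ p p' : ι → ℚ≥0, (∀ q, p q ≠ 0) → (∀ q, p' q ≠ 0) →
      ∀ x, Fp p x ≠ 0 → Fp p' x ≠ 0 := by
    intro p p' hp hp' x h h0
    exact h ((hpos_iff p hp x).mpr ((hpos_iff p' hp' x).mp h0))
  -- grid points are expressible over 𝓗 ∪ U'
  have hclone : ∀ p : ι → ℚ≥0, (∀ q, ∃ e : ℕ, p q = 2 ^ e) →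
      InFClone (𝓗 ∪ {G : WFun D | ∃ u : D → ℚ≥0, (∀ d, u d = 1 ∨ u d = 2) ∧
        G = ⟨1, fun x => u (x 0)⟩}) (Fp p) := by
    intro p hp
    choose e he using hp
    refine inFClone_of_mixed _ ar G sc A ?_ ?_ (fun j d => e (j, d)) w (Fp p) ?_
    · intro j hj
      rcases hj with h1 | h1
      · exact Or.inl (Or.inl h1)
      · exact Or.inr h1
    · intro uu huu
      exact Or.inr ⟨uu, huu, rfl⟩
    · intro x
      refine Finset.sum_congr rfl fun z _ => Finset.prod_congr rfl fun j _ => ?_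
      by_cases hj : A j
      · rw [dif_pos hj, dif_pos hj]
      · rw [dif_neg hj, dif_neg hj, he]
  -- connectivity transfer
  have hconn_mono : ∀ (p p' : ι → ℚ≥0), (∀ x, Fp p x ≠ 0 → Fp p' x ≠ 0) →
      ∀ a b', Relation.ReflTransGen
          (MatAdj (fun (x : Fin k → D) (y : Fin l → D) => Fp p (Fin.append x y))) a b' →
        Relation.ReflTransGen
          (MatAdj (fun (x : Fin k → D) (y : Fin l → D) => Fp p' (Fin.append x y))) a b' := by
    intro p p' hpp a b' hab
    refine Relation.ReflTransGen.mono ?_ a b' hab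
    intro a b hadj
    cases a with
    | inl x => cases b with
      | inl _ => exact absurd hadj (by simp [MatAdj])
      | inr y => exact hpp _ hadj
    | inr y => cases b with
      | inl x => exact hpp _ hadj
      | inr _ => exact absurd hadj (by simp [MatAdj])
  -- the dominating strictly positive grid point
  let pbig : ι → ℚ≥0 := fun q => 2 ^ (⌈p₀ q⌉₊ + 1)
  have hbig_grid : ∀ q, ∃ e : ℕ, pbig q = 2 ^ e := fun q => ⟨_, rfl⟩
  have hbig_pos : ∀ q, pbig q ≠ 0 := fun q => pow_ne_zero _ two_ne_zero
  have hp₀big : p₀ ≤ pbig := by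
    intro q
    calc p₀ q ≤ (⌈p₀ q⌉₊ : ℚ≥0) := Nat.le_ceil _
    _ ≤ 2 ^ (⌈p₀ q⌉₊ + 1) := by
        have h2 : (⌈p₀ q⌉₊ : ℚ≥0) ≤ ((2 ^ (⌈p₀ q⌉₊ + 1) : ℕ) : ℚ≥0) := by
          exact_mod_cast (Nat.lt_two_pow_self (n := _)).le.trans (Nat.pow_le_pow_right (by norm_num) (Nat.le_succ _))
        simpa using h2
  -- the goal, reduced to vanishing of connected 2×2 minors at p₀
  have hFrw : (fun (x : Fin k → D) (y : Fin l → D) => F (Fin.append x y)) =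
      fun x y => Fp p₀ (Fin.append x y) := by
    funext x y
    exact hFp₀ _
  rw [hFrw]
  apply blockRank1_of_minors
  intro r r' c c' h1 h2 h3
  -- minors vanish at every strictly positive grid point
  have hminor_grid : ∀ p : ι → ℚ≥0, (∀ q, ∃ e : ℕ, p q = 2 ^ e) →
      Fp p (Fin.append r c) * Fp p (Fin.append r' c') =
        Fp p (Fin.append r c') * Fp p (Fin.append r' c) := by
    intro p hp
    have hppos : ∀ q, p q ≠ 0 := by
      intro q
      obtain ⟨e, he⟩ := hp q
      rw [he]
      exact pow_ne_zero _ two_ne_zero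
    have htr : ∀ a b', Relation.ReflTransGen
        (MatAdj (fun (x : Fin k → D) (y : Fin l → D) => Fp p₀ (Fin.append x y))) a b' →
        Relation.ReflTransGen
        (MatAdj (fun (x : Fin k → D) (y : Fin l → D) => Fp p (Fin.append x y))) a b' := by
      intro a b' hab
      exact hconn_mono pbig p (hposne pbig p hbig_pos hppos) a b'
        (hconn_mono p₀ pbig (hne_mono p₀ pbig hp₀big) a b' hab)
    obtain ⟨uu, vv, hfac⟩ := bal k l hk hl (Fp p) (hclone p hp)
    have h1p := htr _ _ h1
    have h2p := htr _ _ h2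
    have h3p := htr _ _ h3
    have h4p := Relation.ReflTransGen.trans h2p
      (Relation.ReflTransGen.trans (conn_symm _ h3p) h1p)
    have e1 : Fp p (Fin.append r c) = uu r * vv c := hfac r c h1p
    have e2 : Fp p (Fin.append r' c') = uu r' * vv c' := hfac r' c' h2p
    have e3 : Fp p (Fin.append r c') = uu r * vv c' := hfac r c' h3p
    have e4 : Fp p (Fin.append r' c) = uu r' * vv c := hfac r' c h4p
    rw [e1, e2, e3, e4]
    ring
  -- transfer the identity to p₀ via polynomials
  let co : ℚ≥0 →+* ℚ := NNRat.coeHom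
  let Q : (Fin (k + l) → D) → MvPolynomial ι ℚ := fun x => MvPolynomial.map co (qP x)
  have hQeval : ∀ (p : ι → ℚ≥0) x,
      MvPolynomial.eval (fun q => (p q : ℚ)) (Q x) = ((Fp p x : ℚ≥0) : ℚ) := by
    intro p x
    rw [show Q x = MvPolynomial.map co (qP x) from rfl, MvPolynomial.eval_map, ← heval p x]
    have hcomp := MvPolynomial.eval₂_comp_left co (RingHom.id ℚ≥0) p (qP x)
    rw [RingHom.comp_id] at hcomp
    have h2 : MvPolynomial.eval₂ co (⇑co ∘ p) (qP x) =
        MvPolynomial.eval₂ co (fun q => ((p q : ℚ≥0) : ℚ)) (qP x) := rfl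
    rw [h2] at hcomp
    rw [← hcomp]
    rfl
  let Δ : MvPolynomial ι ℚ := Q (Fin.append r c) * Q (Fin.append r' c') -
    Q (Fin.append r c') * Q (Fin.append r' c)
  have hS : (Set.range fun e : ℕ => (2:ℚ) ^ e).Infinite := by
    refine Set.infinite_range_of_injective ?_
    intro a b hab
    have hab' : (2:ℚ) ^ a = (2:ℚ) ^ b := hab
    have : (2:ℕ) ^ a = 2 ^ b := by exact_mod_cast hab'
    exact Nat.pow_right_injective (le_refl 2) this
  have hvanish : ∀ v : ι → ℚ, (∀ q, v q ∈ Set.range fun e : ℕ => (2:ℚ) ^ e) →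
      MvPolynomial.eval v Δ = 0 := by
    intro v hv
    choose ev hev using hv
    let p : ι → ℚ≥0 := fun q => 2 ^ ev q
    have hvp : (fun q => ((p q : ℚ≥0) : ℚ)) = v := by
      funext q
      rw [← hev q]
      push_cast [p]
      ring
    have hpg : ∀ q, ∃ e : ℕ, p q = 2 ^ e := fun q => ⟨ev q, rfl⟩
    have hm := hminor_grid p hpg
    simp only [Δ, map_sub, map_mul]
    rw [← hvp, hQeval, hQeval, hQeval, hQeval]
    rw [sub_eq_zero]
    exact_mod_cast congrArg (fun t : ℚ≥0 => ((t : ℚ≥0) : ℚ)) hm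
  have h0 := mv_eval_eq_zero_of_grid Δ _ hS hvanish (fun q => ((p₀ q : ℚ≥0) : ℚ))
  simp only [Δ, map_sub, map_mul] at h0
  rw [hQeval, hQeval, hQeval, hQeval, sub_eq_zero] at h0
  exact_mod_cast h0

end AuxLemmas

/-- For a finite weighted constraint language `𝓗`, with `U`
the set of all unary weight functions and `U'` the set of unary functions
taking values in `{1, 2}`, the following are equivalent:
(1) `𝓗 ∪ U'` is balanced; (2) every finite subset of `𝓗 ∪ U` is balanced;
(3) `𝓗 ∪ U` is balanced. -/
theorem balanced_unary_equiv
    {D : Type} [Fintype D] [DecidableEq D] (hD : 2 ≤ Fintype.card D)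
    (𝓗 : Set (WFun D)) (hfin : 𝓗.Finite) :
    (BalancedLang (𝓗 ∪ {G : WFun D | ∃ u : D → ℚ≥0, (∀ d, u d = 1 ∨ u d = 2) ∧
        G = ⟨1, fun x => u (x 0)⟩}) ↔
      ∀ 𝓖 ⊆ 𝓗 ∪ {G : WFun D | ∃ u : D → ℚ≥0, G = ⟨1, fun x => u (x 0)⟩},
        𝓖.Finite → BalancedLang 𝓖) ∧
    ((∀ 𝓖 ⊆ 𝓗 ∪ {G : WFun D | ∃ u : D → ℚ≥0, G = ⟨1, fun x => u (x 0)⟩},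
        𝓖.Finite → BalancedLang 𝓖) ↔
      BalancedLang (𝓗 ∪ {G : WFun D | ∃ u : D → ℚ≥0, G = ⟨1, fun x => u (x 0)⟩})) := by
  have hsub : (𝓗 ∪ {G : WFun D | ∃ u : D → ℚ≥0, (∀ d, u d = 1 ∨ u d = 2) ∧
      G = ⟨1, fun x => u (x 0)⟩}) ⊆
      (𝓗 ∪ {G : WFun D | ∃ u : D → ℚ≥0, G = ⟨1, fun x => u (x 0)⟩}) := by
    refine Set.union_subset_union_right 𝓗 ?_
    rintro G ⟨u, -, hG⟩
    exact ⟨u, hG⟩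
  have e31 : BalancedLang (𝓗 ∪ {G : WFun D | ∃ u : D → ℚ≥0, G = ⟨1, fun x => u (x 0)⟩}) →
      ∀ 𝓖 ⊆ 𝓗 ∪ {G : WFun D | ∃ u : D → ℚ≥0, G = ⟨1, fun x => u (x 0)⟩},
        𝓖.Finite → BalancedLang 𝓖 :=
    fun h3 𝓖 hs _ => balanced_anti hs h3
  have e21 : (∀ 𝓖 ⊆ 𝓗 ∪ {G : WFun D | ∃ u : D → ℚ≥0, G = ⟨1, fun x => u (x 0)⟩},
        𝓖.Finite → BalancedLang 𝓖) →
      BalancedLang (𝓗 ∪ {G : WFun D | ∃ u : D → ℚ≥0, (∀ d, u d = 1 ∨ u d = 2) ∧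
        G = ⟨1, fun x => u (x 0)⟩}) :=
    fun h2 => h2 _ hsub (hfin.union (unary12_finite D))
  have e13 : BalancedLang (𝓗 ∪ {G : WFun D | ∃ u : D → ℚ≥0, (∀ d, u d = 1 ∨ u d = 2) ∧
        G = ⟨1, fun x => u (x 0)⟩}) →
      BalancedLang (𝓗 ∪ {G : WFun D | ∃ u : D → ℚ≥0, G = ⟨1, fun x => u (x 0)⟩}) :=
    main_one_three 𝓗
  exact ⟨⟨fun h1 => e31 (e13 h1), e21⟩,
    ⟨fun h2 => balanced_of_finite_subsets _ h2, e31⟩⟩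
end

section
/- Let Φ be a valued constraint language over a finite domain D, let I be a VCSP instance over Φ with constraint multiset T and n variables, and let t ∈ T. For each N ∈ ℕ let I_N be the instance obtained from I by adding N further copies of the valued constraint t. Suppose ⟨⊓,⊔⟩ is a pair of families of binary operations (one pair ⟨⊓ᵢ,⊔ᵢ⟩ for each variable index i ∈ {1,…,n}) which is a multisorted multimorphism of f_{I_N} for every N ∈ ℕ. Then the restriction ⟨⊓[σ_t],⊔[σ_t]⟩ of these families to the coordinates in the scope σ_t is a multisorted multimorphism of f'_t = f_t + R_{I,t}. -/
open scoped ENNReal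

/-- The feasibility domain of coordinate `i` of a cost function `g`:
the set of values taken at `i` by some point where `g` is finite. -/
def feasSet {D : Type} {k : ℕ} (g : (Fin k → D) → ℝ≥0∞) (i : Fin k) : Set D :=
  {a | ∃ x : Fin k → D, x i = a ∧ g x ≠ ⊤}

/-- `⟨inf, sup⟩` is a multisorted multimorphism of the cost function `g`:
for each coordinate `i`, the pair `⟨infᵢ, supᵢ⟩` is conservative and commutative
on the feasibility domain `Dᵢ` of `g`, and applying them componentwise we have
`g(x ⊓ y) + g(x ⊔ y) ≤ g(x) + g(y)` on `D₁ × ⋯ × D_k`. -/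
def IsMultisortedMM {D : Type} {k : ℕ} (g : (Fin k → D) → ℝ≥0∞)
    (inf sup : Fin k → D → D → D) : Prop :=
  (∀ i : Fin k, ∀ a ∈ feasSet g i, ∀ b ∈ feasSet g i,
      ({inf i a b, sup i a b} : Multiset D) = {a, b} ∧
      inf i a b = inf i b a ∧ sup i a b = sup i b a) ∧
  ∀ x y : Fin k → D, (∀ i, x i ∈ feasSet g i) → (∀ i, y i ∈ feasSet g i) →
    g (fun i => inf i (x i) (y i)) + g (fun i => sup i (x i) (y i)) ≤ g x + g y

open Classical in
/-- Let `I` be a VCSP instance with constraints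
`t = 0, …, m-1`, cost functions `f t` and scopes `sc t`, over `n` variables, and
let `t₀` be a constraint of `I`.  For `N ∈ ℕ`, `I_N` is `I` with `N` extra
copies of `t₀`.  If `⟨inf, sup⟩` (one pair of binary operations per variable)
is a multisorted multimorphism of `f_{I_N}` for every `N`, then its restriction
to the scope of `t₀` is a multisorted multimorphism of
`f'_{t₀} = f_{t₀} + R_{I,t₀}`. -/
theorem multisorted_of_all_copies
    {D : Type} [Fintype D] [DecidableEq D] (hD : 2 ≤ Fintype.card D)
    (n m : ℕ) (ar : Fin m → ℕ)
    (f : ∀ t : Fin m, (Fin (ar t) → D) → ℝ≥0∞)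
    (sc : ∀ t : Fin m, Fin (ar t) → Fin n) (t₀ : Fin m)
    (inf sup : Fin n → D → D → D)
    (hmm : ∀ N : ℕ, IsMultisortedMM
      (fun x : Fin n → D =>
        (∑ t : Fin m, f t (fun i => x (sc t i))) + N * f t₀ (fun i => x (sc t₀ i)))
      inf sup) :
    IsMultisortedMM
      (fun a : Fin (ar t₀) → D =>
        f t₀ a +
          if ∃ x : Fin n → D, (∀ i, x (sc t₀ i) = a i) ∧
              (∑ t : Fin m, f t (fun i => x (sc t i))) ≠ ⊤
          then 0 else ⊤)
      (fun i => inf (sc t₀ i)) (fun i => sup (sc t₀ i)) := by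
  set F : (Fin n → D) → ℝ≥0∞ := fun x => ∑ t : Fin m, f t (fun i => x (sc t i)) with hF
  change ∀ N : ℕ, IsMultisortedMM (fun x : Fin n → D => F x + N * f t₀ (fun i => x (sc t₀ i))) inf sup at hmm
  change IsMultisortedMM (fun a : Fin (ar t₀) → D => f t₀ a + if ∃ x : Fin n → D, (∀ i, x (sc t₀ i) = a i) ∧ F x ≠ ⊤ then 0 else ⊤) (fun i => inf (sc t₀ i)) (fun i => sup (sc t₀ i))
  -- the term of t₀ is at most the whole sum
  have hterm : ∀ x : Fin n → D, f t₀ (fun i => x (sc t₀ i)) ≤ F x := by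
    intro x
    exact Finset.single_le_sum (f := fun t => f t (fun i => x (sc t i)))
      (fun _ _ => zero_le) (Finset.mem_univ t₀)
  -- membership in the feasibility sets of the instance I_N
  have hmem : ∀ (N : ℕ) (x : Fin n → D), F x ≠ ⊤ → ∀ j : Fin n,
      x j ∈ feasSet (fun x : Fin n → D => F x + N * f t₀ (fun i => x (sc t₀ i))) j := by
    intro N x hx j
    refine ⟨x, rfl, ?_⟩
    have h1 : f t₀ (fun i => x (sc t₀ i)) ≠ ⊤ := fun h => hx (top_le_iff.mp (h ▸ hterm x))
    exact ENNReal.add_ne_top.mpr ⟨hx, ENNReal.mul_ne_top (ENNReal.natCast_ne_top N) h1⟩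
  -- the target cost function being finite gives a feasible extension
  have hfeas : ∀ a : Fin (ar t₀) → D,
      (f t₀ a + if ∃ x : Fin n → D, (∀ i, x (sc t₀ i) = a i) ∧ F x ≠ ⊤ then 0 else ⊤) ≠ ⊤ →
      ∃ x : Fin n → D, (∀ i, x (sc t₀ i) = a i) ∧ F x ≠ ⊤ := by
    intro a ha
    by_contra h
    rw [if_neg h, add_top] at ha
    exact ha rfl
  constructor
  · -- conservativity/commutativity, from the N = 0 instance
    intro i a ha b hb
    have key := (hmm 0).1 (sc t₀ i)
    have trans : ∀ c : D, c ∈ feasSet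
        (fun a : Fin (ar t₀) → D =>
          f t₀ a + if ∃ x : Fin n → D, (∀ i, x (sc t₀ i) = a i) ∧ F x ≠ ⊤ then 0 else ⊤) i →
        c ∈ feasSet (fun x : Fin n → D => F x + (0:ℕ) * f t₀ (fun i => x (sc t₀ i))) (sc t₀ i) := by
      rintro c ⟨v, hv, hvfin⟩
      obtain ⟨x, hx, hxfin⟩ := hfeas v hvfin
      exact (hx i ▸ hv) ▸ hmem 0 x hxfin (sc t₀ i)
    exact key a (trans a ha) b (trans b hb)
  · -- the multimorphism inequality
    intro a b _ _
    by_cases hA : (f t₀ a + if ∃ x : Fin n → D, (∀ i, x (sc t₀ i) = a i) ∧ F x ≠ ⊤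
        then 0 else ⊤) = ⊤
    · simp only [hA, top_add]; exact le_top
    by_cases hB : (f t₀ b + if ∃ x : Fin n → D, (∀ i, x (sc t₀ i) = b i) ∧ F x ≠ ⊤
        then 0 else ⊤) = ⊤
    · simp only [hB, add_top]; exact le_top
    obtain ⟨xa, hxa, hxafin⟩ := hfeas a hA
    obtain ⟨xb, hxb, hxbfin⟩ := hfeas b hB
    set xi : Fin n → D := fun j => inf j (xa j) (xb j) with hxi
    set xs : Fin n → D := fun j => sup j (xa j) (xb j) with hxs
    have hxi_sc : ∀ i : Fin (ar t₀), xi (sc t₀ i) = inf (sc t₀ i) (a i) (b i) := by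
      intro i; simp [hxi, hxa i, hxb i]
    have hxs_sc : ∀ i : Fin (ar t₀), xs (sc t₀ i) = sup (sc t₀ i) (a i) (b i) := by
      intro i; simp [hxs, hxa i, hxb i]
    have hfa : (fun i => xa (sc t₀ i)) = a := funext hxa
    have hfb : (fun i => xb (sc t₀ i)) = b := funext hxb
    have hfi : (fun i => xi (sc t₀ i)) = fun i => inf (sc t₀ i) (a i) (b i) := funext hxi_sc
    have hfs : (fun i => xs (sc t₀ i)) = fun i => sup (sc t₀ i) (a i) (b i) := funext hxs_sc
    -- key inequality for every N
    have key : ∀ N : ℕ,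
        (F xi + N * f t₀ (fun i => inf (sc t₀ i) (a i) (b i))) +
        (F xs + N * f t₀ (fun i => sup (sc t₀ i) (a i) (b i))) ≤
        (F xa + N * f t₀ a) + (F xb + N * f t₀ b) := by
      intro N
      have h : (F xi + N * f t₀ (fun i => xi (sc t₀ i))) + (F xs + N * f t₀ (fun i => xs (sc t₀ i))) ≤
          (F xa + N * f t₀ (fun i => xa (sc t₀ i))) + (F xb + N * f t₀ (fun i => xb (sc t₀ i))) :=
        (hmm N).2 xa xb (hmem N xa hxafin) (hmem N xb hxbfin)
      simpa only [hfa, hfb, hfi, hfs] using h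
    set u := f t₀ (fun i => inf (sc t₀ i) (a i) (b i)) with hu
    set v := f t₀ (fun i => sup (sc t₀ i) (a i) (b i)) with hv
    set p := f t₀ a with hp
    set q := f t₀ b with hq
    have hC : F xa + F xb ≠ ⊤ := ENNReal.add_ne_top.mpr ⟨hxafin, hxbfin⟩
    -- N = 0 gives finiteness of F xi, F xs
    have h0 : F xi + F xs ≤ F xa + F xb := by
      have := key 0
      simpa using this
    have hxifin : F xi ≠ ⊤ := by
      intro h
      exact hC (top_le_iff.mp (le_trans (by simp [h]) h0))
    have hxsfin : F xs ≠ ⊤ := by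
      intro h
      exact hC (top_le_iff.mp (le_trans (by simp [h]) h0))
    have hule : u ≤ F xi := hu ▸ hfi ▸ hterm xi
    have hvle : v ≤ F xs := hv ▸ hfs ▸ hterm xs
    have hple : p ≤ F xa := hp ▸ hfa ▸ hterm xa
    have hqle : q ≤ F xb := hq ▸ hfb ▸ hterm xb
    have hufin : u ≠ ⊤ := fun h => hxifin (top_le_iff.mp (h ▸ hule))
    have hvfin : v ≠ ⊤ := fun h => hxsfin (top_le_iff.mp (h ▸ hvle))
    have hpfin : p ≠ ⊤ := fun h => hxafin (top_le_iff.mp (h ▸ hple))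
    have hqfin : q ≠ ⊤ := fun h => hxbfin (top_le_iff.mp (h ▸ hqle))
    -- the if-conditions for inf/sup of a,b hold
    have hcondi : ∃ x : Fin n → D, (∀ i, x (sc t₀ i) = inf (sc t₀ i) (a i) (b i)) ∧ F x ≠ ⊤ :=
      ⟨xi, hxi_sc, hxifin⟩
    have hconds : ∃ x : Fin n → D, (∀ i, x (sc t₀ i) = sup (sc t₀ i) (a i) (b i)) ∧ F x ≠ ⊤ :=
      ⟨xs, hxs_sc, hxsfin⟩
    have hconda : ∃ x : Fin n → D, (∀ i, x (sc t₀ i) = a i) ∧ F x ≠ ⊤ := ⟨xa, hxa, hxafin⟩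
    have hcondb : ∃ x : Fin n → D, (∀ i, x (sc t₀ i) = b i) ∧ F x ≠ ⊤ := ⟨xb, hxb, hxbfin⟩
    simp only [if_pos hcondi, if_pos hconds, if_pos hconda, if_pos hcondb, add_zero]
    -- now suffices: u + v ≤ p + q
    show u + v ≤ p + q
    by_contra hlt
    push_neg at hlt
    set d := (u + v) - (p + q) with hd
    have hdne : d ≠ 0 := by
      simp only [hd, ← pos_iff_ne_zero]
      exact tsub_pos_of_lt hlt
    have hdfin : d ≠ ⊤ := by
      intro h
      exact ENNReal.add_ne_top.mpr ⟨hufin, hvfin⟩ (top_le_iff.mp (h ▸ tsub_le_self))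
    have hsum : (p + q) + d = u + v := add_tsub_cancel_of_le hlt.le
    have hpq : p + q ≠ ⊤ := ENNReal.add_ne_top.mpr ⟨hpfin, hqfin⟩
    -- for every N: N * d ≤ F xa + F xb
    have hNd : ∀ N : ℕ, (N : ℝ≥0∞) * d ≤ F xa + F xb := by
      intro N
      have h1 : (N : ℝ≥0∞) * (u + v) ≤ (F xa + F xb) + N * (p + q) := by
        calc (N : ℝ≥0∞) * (u + v) = N * u + N * v := mul_add _ _ _
          _ ≤ (F xi + N * u) + (F xs + N * v) := by
              gcongr <;> simp
          _ ≤ (F xa + N * p) + (F xb + N * q) := key N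
          _ = (F xa + F xb) + N * (p + q) := by ring
      have h2 : (N : ℝ≥0∞) * (p + q) + N * d ≤ N * (p + q) + (F xa + F xb) := by
        calc (N : ℝ≥0∞) * (p + q) + N * d = N * ((p + q) + d) := (mul_add _ _ _).symm
          _ = N * (u + v) := by rw [hsum]
          _ ≤ (F xa + F xb) + N * (p + q) := h1
          _ = N * (p + q) + (F xa + F xb) := add_comm _ _
      exact (ENNReal.add_le_add_iff_left
        (ENNReal.mul_ne_top (ENNReal.natCast_ne_top N) hpq)).mp h2
    obtain ⟨N, hN⟩ := ENNReal.exists_nat_gt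
      (show (F xa + F xb) / d ≠ ⊤ from (by simp [ENNReal.div_eq_top, hC, hdne] : (F xa + F xb) / d ≠ ⊤))
    have : F xa + F xb < N * d := (ENNReal.div_lt_iff (Or.inl hdne) (Or.inl hdfin)).mp hN
    exact absurd (hNd N) (not_le.mpr this)
end

section
/- Let D₁,…,D_k be finite non-empty totally ordered sets and let f : D₁×⋯×D_k → ℝ̄≥0 satisfy f(x ∧ y) + f(x ∨ y) ≤ f(x) + f(y) for all x,y ∈ D₁×⋯×D_k, where ∧ and ∨ are componentwise minimum and maximum. For each i let Dᵢ⁺ = Dᵢ ∪ {⊥ᵢ} with a new least element ⊥ᵢ, and for a ∈ Dᵢ⁺ let U_{i,a} = {b ∈ Dᵢ⁺ : b < a}. Let V be the disjoint union of the sets Dᵢ⁺, and define f'' : 2^V → ℝ̄≥0 by f''(A) = f(a₁,…,a_k) if A = U_{1,a₁} ∪ ⋯ ∪ U_{k,a_k} for some (a₁,…,a_k) ∈ D₁×⋯×D_k, and f''(A) = ∞ otherwise. Then f'' is submodular: f''(A ∩ B) + f''(A ∪ B) ≤ f''(A) + f''(B) for all A, B ⊆ V. -/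
open scoped ENNReal

/-- Let `f` be a submodular function on a product of finite
non-empty totally ordered sets `D₁ × ⋯ × D_k` with values in `ℝ≥0 ∪ {∞}`.
Adjoin a new least element `⊥ᵢ` to each `Dᵢ` (via `WithBot`), let `V` be the
disjoint union of the `Dᵢ⁺`, and encode `(a₁, …, a_k)` as the set
`U_{1,a₁} ∪ ⋯ ∪ U_{k,a_k} ⊆ V` where `U_{i,a} = {b ∈ Dᵢ⁺ : b < a}`.  Then any
`f'' : 2^V → ℝ≥0∞` agreeing with `f` on encoded tuples and equal to `∞`
elsewhere is submodular. -/
theorem submodular_of_encoded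
    (k : ℕ) (Dd : Fin k → Type)
    [∀ i, Fintype (Dd i)] [∀ i, Nonempty (Dd i)] [∀ i, LinearOrder (Dd i)]
    (f : (∀ i, Dd i) → ℝ≥0∞)
    (hsub : ∀ x y : ∀ i, Dd i, f (x ⊓ y) + f (x ⊔ y) ≤ f x + f y)
    (f'' : Set ((i : Fin k) × WithBot (Dd i)) → ℝ≥0∞)
    (henc : ∀ a : ∀ i, Dd i,
      f'' {v : (i : Fin k) × WithBot (Dd i) | v.2 < (a v.1 : WithBot (Dd v.1))} = f a)
    (hother : ∀ A : Set ((i : Fin k) × WithBot (Dd i)),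
      (¬ ∃ a : ∀ i, Dd i,
        A = {v : (i : Fin k) × WithBot (Dd i) | v.2 < (a v.1 : WithBot (Dd v.1))}) →
      f'' A = ⊤) :
    ∀ A B : Set ((i : Fin k) × WithBot (Dd i)),
      f'' (A ∩ B) + f'' (A ∪ B) ≤ f'' A + f'' B := by
  intro A B
  by_cases hA : ∃ a : ∀ i, Dd i,
      A = {v : (i : Fin k) × WithBot (Dd i) | v.2 < (a v.1 : WithBot (Dd v.1))}
  · by_cases hB : ∃ b : ∀ i, Dd i,
        B = {v : (i : Fin k) × WithBot (Dd i) | v.2 < (b v.1 : WithBot (Dd v.1))}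
    · obtain ⟨a, rfl⟩ := hA
      obtain ⟨b, rfl⟩ := hB
      have hinter : ({v : (i : Fin k) × WithBot (Dd i) | v.2 < (a v.1 : WithBot (Dd v.1))} ∩
          {v : (i : Fin k) × WithBot (Dd i) | v.2 < (b v.1 : WithBot (Dd v.1))}) =
          {v : (i : Fin k) × WithBot (Dd i) | v.2 < ((a ⊓ b) v.1 : WithBot (Dd v.1))} := by
        ext v
        simp [Pi.inf_apply, WithBot.coe_inf, lt_inf_iff]
      have hunion : ({v : (i : Fin k) × WithBot (Dd i) | v.2 < (a v.1 : WithBot (Dd v.1))} ∪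
          {v : (i : Fin k) × WithBot (Dd i) | v.2 < (b v.1 : WithBot (Dd v.1))}) =
          {v : (i : Fin k) × WithBot (Dd i) | v.2 < ((a ⊔ b) v.1 : WithBot (Dd v.1))} := by
        ext v
        simp [Pi.sup_apply, WithBot.coe_sup, lt_sup_iff]
      rw [hinter, hunion, henc, henc, henc, henc]
      exact hsub a b
    · rw [hother B hB]
      simp
  · rw [hother A hA]
    simp
end

section
/- A real matrix M with row set R and column set C has block-rank 1 if and only if, for every u,u' ∈ R and v,v' ∈ C, the 2×2 matrix N with entries N₁₁ = M(u,v), N₁₂ = M(u,v'), N₂₁ = M(u',v), N₂₂ = M(u',v') has block-rank 1. -/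
section Aux

variable {R C : Type*} (M : R → C → ℝ)

lemma matAdj_symm_s17 : Symmetric (MatAdj M) := by
  intro x y h
  cases x <;> cases y <;> simp_all [MatAdj]

def QQ (x y : R ⊕ C) : Prop :=
  match x, y with
  | Sum.inl r, Sum.inl r' => ∀ c, M r' c ≠ 0 → M r c ≠ 0
  | Sum.inl r, Sum.inr c => M r c ≠ 0
  | Sum.inr c, Sum.inl r => M r c ≠ 0
  | Sum.inr c, Sum.inr c' => ∀ r, M r c' ≠ 0 → M r c ≠ 0

lemma conn_qq
    (hstar : ∀ u u' v v', M u v ≠ 0 → M u v' ≠ 0 → M u' v ≠ 0 → M u' v' ≠ 0)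
    {x y : R ⊕ C} (h : Relation.ReflTransGen (MatAdj M) x y) : QQ M x y := by
  induction h with
  | refl => cases x <;> simp [QQ]
  | @tail b c hxb hbc ih =>
    rcases b with r' | c' <;> rcases c with r | cc <;> simp [MatAdj] at hbc
    · rcases x with r0 | c0 <;> simp only [QQ] at ih ⊢
      · exact ih cc hbc
      · exact fun r hr => hstar r' r cc c0 hbc ih hr
    · rcases x with r0 | c0 <;> simp only [QQ] at ih ⊢
      · exact fun c hc => hstar r r0 c' c hbc hc ih
      · exact ih r hbc

lemma conn_ne_zero
    (hstar : ∀ u u' v v', M u v ≠ 0 → M u v' ≠ 0 → M u' v ≠ 0 → M u' v' ≠ 0)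
    {r : R} {c : C} (h : Relation.ReflTransGen (MatAdj M) (Sum.inl r) (Sum.inr c)) :
    M r c ≠ 0 :=
  conn_qq M hstar h

end Aux

lemma blockRank1_of_star {R C : Type} [Fintype R] [Fintype C] (M : R → C → ℝ)
    (hstar2 : ∀ u u' v v', M u v ≠ 0 → M u v' ≠ 0 → M u' v ≠ 0 →
      M u' v' ≠ 0 ∧ M u v * M u' v' = M u v' * M u' v) : BlockRank1 M := by
  classical
  have hstar : ∀ u u' v v', M u v ≠ 0 → M u v' ≠ 0 → M u' v ≠ 0 → M u' v' ≠ 0 :=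
    fun u u' v v' h1 h2 h3 => (hstar2 u u' v v' h1 h2 h3).1
  set conn : R → C → Prop :=
    fun r c => Relation.ReflTransGen (MatAdj M) (Sum.inl r) (Sum.inr c) with hconn
  have hsym : ∀ {x y : R ⊕ C}, Relation.ReflTransGen (MatAdj M) x y →
      Relation.ReflTransGen (MatAdj M) y x := by
    intro x y h
    induction h with
    | refl => exact Relation.ReflTransGen.refl
    | tail hxb hbc ih => exact Relation.ReflTransGen.head (matAdj_symm_s17 M hbc) ih
  set e : C ≃ Fin (Fintype.card C) := Fintype.equivFin C with he
  set S : R → Finset (Fin (Fintype.card C)) :=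
    fun r => (Finset.univ.filter (fun c => conn r c)).image e with hS
  have hmemS : ∀ {r c}, conn r c → e c ∈ S r := by
    intro r c h
    simp only [hS, Finset.mem_image, Finset.mem_filter, Finset.mem_univ, true_and]
    exact ⟨c, h, rfl⟩
  have hmemS' : ∀ (r : R) (x : Fin (Fintype.card C)), x ∈ S r → conn r (e.symm x) := by
    intro r x hx
    simp only [hS, Finset.mem_image, Finset.mem_filter, Finset.mem_univ, true_and] at hx
    obtain ⟨c', hc', rfl⟩ := hx
    simpa using hc'
  set c0 : ∀ r : R, (S r).Nonempty → C := fun r h => e.symm ((S r).min' h) with hc0def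
  have hc0 : ∀ (r : R) (h : (S r).Nonempty), conn r (c0 r h) := by
    intro r h
    exact hmemS' r _ ((S r).min'_mem h)
  -- S depends only on the component
  have hScomp : ∀ {r r' : R} {c : C}, conn r c → conn r' c → S r = S r' := by
    intro r r' c h h'
    have hfilter : (Finset.univ.filter (fun c'' => conn r c'')) =
        (Finset.univ.filter (fun c'' => conn r' c'')) := by
      ext c''
      simp only [Finset.mem_filter, Finset.mem_univ, true_and]
      constructor
      · intro hr
        exact Relation.ReflTransGen.trans (Relation.ReflTransGen.trans h' (hsym h)) hr
      · intro hr
        exact Relation.ReflTransGen.trans (Relation.ReflTransGen.trans h (hsym h')) hr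
    simp only [hS, hfilter]
  have min_eq : ∀ {r r' : R} (h : (S r).Nonempty) (h' : (S r').Nonempty),
      S r = S r' → (S r).min' h = (S r').min' h' := by
    intro r r' h h' hE
    have m1 : (S r').min' h' ∈ S r := by rw [hE]; exact (S r').min'_mem h'
    have m2 : (S r).min' h ∈ S r' := by rw [← hE]; exact (S r).min'_mem h
    exact le_antisymm (Finset.min'_le _ _ m1) (Finset.min'_le _ _ m2)
  set u : R → ℝ := fun r => if h : (S r).Nonempty then M r (c0 r h) else 0 with hu
  set v : C → ℝ := fun c => if h : ∃ r', conn r' c then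
      (if h0 : (S (Classical.choose h)).Nonempty then
        M (Classical.choose h) c / M (Classical.choose h) (c0 (Classical.choose h) h0)
       else 0)
    else 0 with hv
  refine ⟨u, v, ?_⟩
  intro r c hrc
  have hrc' : conn r c := hrc
  have hr : (S r).Nonempty := ⟨e c, hmemS hrc'⟩
  have h2 : ∃ r', conn r' c := ⟨r, hrc'⟩
  have hr1 : conn (Classical.choose h2) c := Classical.choose_spec h2
  have h0 : (S (Classical.choose h2)).Nonempty := ⟨e c, hmemS hr1⟩
  have huval : u r = M r (c0 r hr) := by
    simp only [hu]; rw [dif_pos hr]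
  have hvval : v c = M (Classical.choose h2) c /
      M (Classical.choose h2) (c0 (Classical.choose h2) h0) := by
    simp only [hv]; rw [dif_pos h2, dif_pos h0]
  rw [huval, hvval]
  set r1 := Classical.choose h2 with hr1def
  have hSeq : S r = S r1 := hScomp hrc' hr1
  have hceq : c0 r hr = c0 r1 h0 := by
    simp only [hc0def]
    exact congrArg e.symm (min_eq hr h0 hSeq)
  have hcr : conn r (c0 r hr) := hc0 r hr
  have hcr1 : conn r1 (c0 r hr) :=
    Relation.ReflTransGen.trans (Relation.ReflTransGen.trans hr1 (hsym hrc')) hcr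
  have n1 : M r c ≠ 0 := conn_ne_zero M hstar hrc'
  have n2 : M r (c0 r hr) ≠ 0 := conn_ne_zero M hstar hcr
  have n3 : M r1 c ≠ 0 := conn_ne_zero M hstar hr1
  have n4 : M r1 (c0 r hr) ≠ 0 := conn_ne_zero M hstar hcr1
  have key := (hstar2 r r1 (c0 r hr) c n2 n1 n4).2
  rw [← hceq]
  have n4' : M (Classical.choose h2) (c0 r hr) ≠ 0 := n4
  field_simp
  linear_combination -key


/-- A real matrix `M` has block-rank 1 iff every `2×2`
submatrix `(M(u,v), M(u,v'); M(u',v), M(u',v'))` has block-rank 1. -/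
theorem blockRank1_iff_all_two_by_two
    {R C : Type} [Fintype R] [Fintype C] (M : R → C → ℝ) :
    BlockRank1 M ↔
      ∀ (u u' : R) (v v' : C),
        BlockRank1 (fun i j : Fin 2 =>
          (!![M u v, M u v'; M u' v, M u' v'] : Matrix (Fin 2) (Fin 2) ℝ) i j) := by
  constructor
  · rintro ⟨p, q, hpq⟩ u u' v v'
    set N : Fin 2 → Fin 2 → ℝ :=
      fun i j => (!![M u v, M u v'; M u' v, M u' v'] : Matrix (Fin 2) (Fin 2) ℝ) i j with hN
    have hNe : ∀ i j, N i j = M (![u, u'] i) (![v, v'] j) := by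
      intro i j; fin_cases i <;> fin_cases j <;> simp [hN]
    refine ⟨fun i => p (![u, u'] i), fun j => q (![v, v'] j), ?_⟩
    intro i j hconn
    have key : Relation.ReflTransGen (MatAdj M)
        (Sum.map ![u, u'] ![v, v'] (Sum.inl i)) (Sum.map ![u, u'] ![v, v'] (Sum.inr j)) := by
      refine Relation.ReflTransGen.lift _ ?_ _ _ hconn
      rintro (a | a) (b | b) hab <;> simp only [MatAdj, Sum.map] at hab ⊢ <;>
        first
          | exact hab.elim
          | · rw [hNe] at hab; exact hab
    rw [hNe]
    exact hpq _ _ key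
  · intro H
    have hstar2 : ∀ u u' v v', M u v ≠ 0 → M u v' ≠ 0 → M u' v ≠ 0 →
        M u' v' ≠ 0 ∧ M u v * M u' v' = M u v' * M u' v := by
      intro u u' v v' h1 h2 h3
      obtain ⟨a, b, hab⟩ := H u u' v v'
      set N : Fin 2 → Fin 2 → ℝ :=
        fun i j => (!![M u v, M u v'; M u' v, M u' v'] : Matrix (Fin 2) (Fin 2) ℝ) i j with hN
      have E00 : N 0 0 = M u v := by simp [hN]
      have E01 : N 0 1 = M u v' := by simp [hN]
      have E10 : N 1 0 = M u' v := by simp [hN]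
      have E11 : N 1 1 = M u' v' := by simp [hN]
      have e00 : MatAdj N (Sum.inl 0) (Sum.inr 0) := by
        show N 0 0 ≠ 0; rw [E00]; exact h1
      have e01 : MatAdj N (Sum.inl 0) (Sum.inr 1) := by
        show N 0 1 ≠ 0; rw [E01]; exact h2
      have e10 : MatAdj N (Sum.inl 1) (Sum.inr 0) := by
        show N 1 0 ≠ 0; rw [E10]; exact h3
      have c00 : Relation.ReflTransGen (MatAdj N) (Sum.inl 0) (Sum.inr 0) :=
        Relation.ReflTransGen.single e00
      have c01 : Relation.ReflTransGen (MatAdj N) (Sum.inl 0) (Sum.inr 1) :=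
        Relation.ReflTransGen.single e01
      have c10 : Relation.ReflTransGen (MatAdj N) (Sum.inl 1) (Sum.inr 0) :=
        Relation.ReflTransGen.single e10
      have c11 : Relation.ReflTransGen (MatAdj N) (Sum.inl 1) (Sum.inr 1) :=
        (Relation.ReflTransGen.single e10).trans
          ((Relation.ReflTransGen.single (matAdj_symm_s17 N e00)).trans
            (Relation.ReflTransGen.single e01))
      have f00 : M u v = a 0 * b 0 := by rw [← E00]; exact hab 0 0 c00
      have f01 : M u v' = a 0 * b 1 := by rw [← E01]; exact hab 0 1 c01
      have f10 : M u' v = a 1 * b 0 := by rw [← E10]; exact hab 1 0 c10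
      have f11 : M u' v' = a 1 * b 1 := by rw [← E11]; exact hab 1 1 c11
      rw [f00, f01, f10, f11]
      rw [f10] at h3; rw [f01] at h2
      constructor
      · exact mul_ne_zero (left_ne_zero_of_mul h3) (right_ne_zero_of_mul h2)
      · ring
    exact blockRank1_of_star M hstar2
end
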